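/- arXiv:1809.09539 — 9 statements merged into one kernel-verified Lean document; each statement's English description precedes it below -/
import Mathlib

section
/- Let (K, v) be a valued field with v: K* → ℝ of rank one, and let E = {s_n} be a pseudo-convergent sequence of transcendental type (i.e. v(f(s_n)) is eventually constant for every polynomial f ∈ K[X]). Then for every rational function φ ∈ K(X) \ {0}, the sequence v(φ(s_n)) is eventually constant, and the map w_E(φ) = lim_n v(φ(s_n)) defines a valuation on K(X) extending v. -/
open Filter

/-- For a pseudo-convergent sequence E of transcendental type in a rank one
valued field, v(φ(s_n)) is eventually constant for every nonzero φ ∈ K(X), and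
w_E(φ) = lim v(φ(s_n)) defines a valuation on K(X) extending v. -/
theorem stmt6 {K : Type*} [Field K] (v : AddValuation K (WithTop ℝ)) (s : ℕ → K)
    (hE : ∀ n, v (s (n + 1) - s n) < v (s (n + 2) - s (n + 1)))
    (htr : ∀ f : Polynomial K, ∃ c : WithTop ℝ, ∀ᶠ n in atTop, v (f.eval (s n)) = c) :
    ∃ w : AddValuation (RatFunc K) (WithTop ℝ),
      (∀ c : K, w (RatFunc.C c) = v c) ∧
      ∀ φ : RatFunc K, φ ≠ 0 →
        ∀ᶠ n in atTop, v (RatFunc.eval (RingHom.id K) (s n) φ) = w φ := by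
  classical
  -- v x = ⊤ ↔ x = 0
  have vtop : ∀ x : K, v x = ⊤ ↔ x = 0 := fun x => v.top_iff
  -- ultrametric: v (a+b) = v a when v a < v b
  have vadd_lt : ∀ a b : K, v a < v b → v (a + b) = v a := by
    intro a b h
    refine le_antisymm ?_ ?_
    · by_contra hlt
      push_neg at hlt
      have h2 : min (v (a + b)) (v (-b)) ≤ v ((a + b) + (-b)) := v.map_add _ _
      rw [add_neg_cancel_right] at h2
      rw [v.map_neg] at h2
      exact absurd h2 (not_le.mpr (lt_min hlt h))
    · have := v.map_add a b
      rwa [min_eq_left h.le] at this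
  -- the differences have strictly increasing valuation
  have dmono : StrictMono (fun n => v (s (n + 1) - s n)) :=
    strictMono_nat_of_lt_succ hE
  -- v (s m - s n) = v (s (n+1) - s n) for n < m
  have sdiff : ∀ n m, n < m → v (s m - s n) = v (s (n + 1) - s n) := by
    intro n m hnm
    induction m with
    | zero => omega
    | succ m ih =>
      rcases Nat.lt_succ_iff_lt_or_eq.mp hnm with h | h
      · have hv : v (s m - s n) < v (s (m + 1) - s m) := by
          rw [ih h]; exact dmono h
        have := vadd_lt _ _ hv
        rwa [add_comm, show s (m + 1) - s m + (s m - s n) = s (m + 1) - s n by ring,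
          ih h] at this
      · subst h; rfl
  -- s is injective
  have sinj : Function.Injective s := by
    intro n m hnm
    by_contra hne
    wlog h : n < m generalizing n m
    · exact this hnm.symm (Ne.symm hne) (by omega)
    have h1 : v (s m - s n) = v (s (n + 1) - s n) := sdiff n m h
    have h2 : v (s (n + 1) - s n) ≠ ⊤ := (dmono (Nat.lt_succ_self n)).ne_top
    rw [← hnm, sub_self, v.map_zero] at h1
    exact h2 h1.symm
  -- nonzero polynomials eventually don't vanish on s
  have evB : ∀ f : Polynomial K, f ≠ 0 → ∀ᶠ n in atTop, f.eval (s n) ≠ 0 := by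
    intro f hf
    rw [← Nat.cofinite_eq_atTop, eventually_cofinite]
    have : {n : ℕ | ¬f.eval (s n) ≠ 0} ⊆ s ⁻¹' {x | f.IsRoot x} := by
      intro n hn
      simp only [Set.mem_setOf_eq, not_not] at hn
      exact hn
    exact Set.Finite.subset ((Polynomial.finite_setOf_isRoot hf).preimage
      sinj.injOn) this
  -- limit values for polynomials
  set W : Polynomial K → WithTop ℝ := fun f => (htr f).choose with hWdef
  have hW : ∀ f : Polynomial K, ∀ᶠ n in atTop, v (f.eval (s n)) = W f :=
    fun f => (htr f).choose_spec
  have hWtop : ∀ f : Polynomial K, f ≠ 0 → W f ≠ ⊤ := by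
    intro f hf
    obtain ⟨n, h1, h2⟩ := ((hW f).and (evB f hf)).exists
    rw [← h1]
    exact (v.ne_top_iff).mpr h2
  -- key: eventual constancy for nonzero rational functions
  have key : ∀ φ : RatFunc K, φ ≠ 0 → ∃ c : WithTop ℝ, c ≠ ⊤ ∧
      ∀ᶠ n in atTop, v (RatFunc.eval (RingHom.id K) (s n) φ) = c := by
    intro φ hφ
    have hn : φ.num ≠ 0 := RatFunc.num_ne_zero hφ
    have hd : φ.denom ≠ 0 := φ.denom_ne_zero
    obtain ⟨b, hb⟩ := WithTop.ne_top_iff_exists.mp (hWtop _ hd)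
    refine ⟨W φ.num + ↑(-b), WithTop.add_ne_top.mpr ⟨hWtop _ hn, WithTop.coe_ne_top⟩, ?_⟩
    filter_upwards [hW φ.num, hW φ.denom, evB _ hd] with n h1 h2 h3
    have hinv : v ((φ.denom.eval (s n))⁻¹) = ↑(-b) := by
      have h0 : v (φ.denom.eval (s n)) + v ((φ.denom.eval (s n))⁻¹) = 0 := by
        rw [← v.map_mul, mul_inv_cancel₀ h3, v.map_one]
      rw [h2, ← hb] at h0
      cases hvi : v ((φ.denom.eval (s n))⁻¹) with
      | top => rw [hvi, add_top] at h0; simp at h0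
      | coe r =>
        rw [hvi] at h0
        have hr : b + r = 0 := by exact_mod_cast h0
        rw [WithTop.coe_eq_coe]
        linarith
    show v (φ.num.eval₂ (RingHom.id K) (s n) / φ.denom.eval₂ (RingHom.id K) (s n)) = _
    rw [show φ.num.eval₂ (RingHom.id K) (s n) = φ.num.eval (s n) from rfl,
      show φ.denom.eval₂ (RingHom.id K) (s n) = φ.denom.eval (s n) from rfl,
      div_eq_mul_inv, v.map_mul, h1, hinv]
  -- the candidate valuation as a function
  set C : RatFunc K → WithTop ℝ := fun φ =>
    if h : φ = 0 then ⊤ else (key φ h).choose with hCdef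
  have hC0 : C 0 = ⊤ := by rw [hCdef]; exact dif_pos rfl
  have hCev : ∀ φ : RatFunc K, ∀ᶠ n in atTop, v (RatFunc.eval (RingHom.id K) (s n) φ) = C φ := by
    intro φ
    by_cases h : φ = 0
    · subst h
      refine Eventually.of_forall fun n => ?_
      rw [RatFunc.eval_zero, v.map_zero, hC0]
    · rw [hCdef]
      simpa only [dif_neg h] using (key φ h).choose_spec.2
  have huniq : ∀ (φ : RatFunc K) (c : WithTop ℝ),
      (∀ᶠ n in atTop, v (RatFunc.eval (RingHom.id K) (s n) φ) = c) → C φ = c := by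
    intro φ c h
    obtain ⟨n, h1, h2⟩ := ((hCev φ).and h).exists
    rw [← h1, h2]
  -- denominator evaluations are eventually nonzero, as eval₂ statements
  have evD : ∀ φ : RatFunc K,
      ∀ᶠ n in atTop, Polynomial.eval₂ (RingHom.id K) (s n) φ.denom ≠ 0 := by
    intro φ
    filter_upwards [evB _ φ.denom_ne_zero] with n h
    exact h
  -- multiplicativity
  have hmul : ∀ φ ψ : RatFunc K, C (φ * ψ) = C φ + C ψ := by
    intro φ ψ
    by_cases hφ : φ = 0
    · subst hφ; rw [zero_mul, hC0, top_add]
    by_cases hψ : ψ = 0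
    · subst hψ; rw [mul_zero, hC0, add_top]
    refine huniq _ _ ?_
    filter_upwards [hCev φ, hCev ψ, evD φ, evD ψ] with n h1 h2 h3 h4
    rw [RatFunc.eval_mul (RingHom.id K) (s n) h3 h4, v.map_mul, h1, h2]
  -- additivity
  have hadd : ∀ φ ψ : RatFunc K, min (C φ) (C ψ) ≤ C (φ + ψ) := by
    intro φ ψ
    by_cases hφ : φ = 0
    · subst hφ; rw [zero_add]; exact min_le_right _ _
    by_cases hψ : ψ = 0
    · subst hψ; rw [add_zero]; exact min_le_left _ _
    by_cases hs : φ + ψ = 0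
    · rw [hs, hC0]; exact le_top
    obtain ⟨n, h1, h2, h3, h4, h5⟩ :=
      ((hCev φ).and ((hCev ψ).and ((evD φ).and ((evD ψ).and (hCev (φ + ψ)))))).exists
    rw [← h5, RatFunc.eval_add (RingHom.id K) (s n) h3 h4, ← h1, ← h2]
    exact v.map_add _ _
  have h1 : C 1 = 0 := by
    refine huniq _ _ ?_
    refine Eventually.of_forall fun n => ?_
    rw [RatFunc.eval_one, v.map_one]
  refine ⟨AddValuation.of C hC0 h1 hadd hmul, ?_, ?_⟩
  · intro c
    show C (RatFunc.C c) = v c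
    refine huniq _ _ (Eventually.of_forall fun n => ?_)
    rw [RatFunc.eval_C]
    rfl
  · intro φ _
    exact hCev φ
end

section
/- Let (K, v) be an algebraically closed valued field of rank one, let E = {s_n} be a pseudo-convergent sequence of algebraic type with pseudo-limit β ∈ K, and let φ ∈ K(X) be nonzero. Let λ be the weighted sum (zeros counted +1, poles counted −1, with multiplicity) of the zeros and poles of φ that are pseudo-limits of E. Then there exists γ ∈ v(K*) such that v(φ(s_n)) = λ·δ_n + γ for all sufficiently large n, where δ_n = v(s_{n+1} - s_n). -/
open scoped Classical

section Helpers

variable {K : Type*} [Field K] (v : AddValuation K (WithTop ℝ))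

private lemma stmt8_coe_zsmul (n : ℤ) (r : ℝ) :
    n • ((r : WithTop ℝ)) = ((n • r : ℝ) : WithTop ℝ) := by
  cases n with
  | ofNat k =>
      have h : (k : ℕ) • ((r : WithTop ℝ)) = ((k • r : ℝ) : WithTop ℝ) := by exact_mod_cast rfl
      simpa using h
  | negSucc k =>
      have h2 : ((k + 1) : ℕ) • ((r : WithTop ℝ)) = (((k + 1) • r : ℝ) : WithTop ℝ) := by
        exact_mod_cast rfl
      rw [negSucc_zsmul, h2, ← WithTop.LinearOrderedAddCommGroup.coe_neg]
      norm_cast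

private lemma stmt8_coe_sum {ι : Type*} (t : Finset ι) (f : ι → ℝ) :
    ((∑ i ∈ t, f i : ℝ) : WithTop ℝ) = ∑ i ∈ t, ((f i : ℝ) : WithTop ℝ) := by
  classical
  induction t using Finset.cons_induction with
  | empty => simp
  | cons a t ha ih => rw [Finset.sum_cons, Finset.sum_cons, WithTop.coe_add, ih]

private lemma stmt8_ne_top {x : K} (hx : x ≠ 0) : v x ≠ ⊤ := by
  intro h
  have h1 := v.map_mul x x⁻¹
  rw [mul_inv_cancel₀ hx, v.map_one, h] at h1
  simp at h1

private lemma stmt8_ne_zero {x : K} (hx : v x ≠ ⊤) : x ≠ 0 := by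
  rintro rfl
  exact hx v.map_zero

private lemma stmt8_val_prod {ι : Type*} (t : Finset ι) (g : ι → K) :
    v (∏ i ∈ t, g i) = ∑ i ∈ t, v (g i) := by
  classical
  induction t using Finset.cons_induction with
  | empty => simpa using v.map_one
  | cons a t ha ih => rw [Finset.prod_cons, Finset.sum_cons, v.map_mul, ih]

private lemma stmt8_val_inv {x : K} {r : ℝ} (hr : v x = (r : WithTop ℝ)) :
    v x⁻¹ = ((-r : ℝ) : WithTop ℝ) := by
  have hx : x ≠ 0 := stmt8_ne_zero v (by rw [hr]; exact WithTop.coe_ne_top)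
  have h1 := v.map_mul x x⁻¹
  rw [mul_inv_cancel₀ hx, v.map_one, hr] at h1
  have htop : v x⁻¹ ≠ ⊤ := by
    intro h
    rw [h] at h1
    simp at h1
  obtain ⟨t, ht⟩ := WithTop.ne_top_iff_exists.mp htop
  rw [← ht] at h1 ⊢
  have h2 : r + t = 0 := by exact_mod_cast h1.symm
  have h3 : t = -r := by linarith
  rw [h3]

private lemma stmt8_val_zpow {x : K} {r : ℝ} (hr : v x = (r : WithTop ℝ)) {e : ℤ}
    (he : e = 1 ∨ e = -1) : v (x ^ e) = (((e : ℝ) * r : ℝ) : WithTop ℝ) := by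
  rcases he with rfl | rfl
  · simpa using hr
  · rw [zpow_neg_one, stmt8_val_inv v hr]
    norm_num

private lemma stmt8_split_zpow {G : Type*} [Field G] {m : ℕ} (f : Fin m → G) (ε : Fin m → ℤ)
    (hε : ∀ i, ε i = 1 ∨ ε i = -1) :
    (∏ i, f i ^ ε i) =
      (∏ i ∈ Finset.univ.filter (fun i => ε i = 1), f i) /
        (∏ i ∈ Finset.univ.filter (fun i => ¬ε i = 1), f i) := by
  classical
  rw [div_eq_mul_inv, ← Finset.prod_inv_distrib,
    ← Finset.prod_filter_mul_prod_filter_not Finset.univ (fun i => ε i = 1) (fun i => f i ^ ε i)]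
  congr 1
  · exact Finset.prod_congr rfl fun i hi => by
      rw [(Finset.mem_filter.1 hi).2, zpow_one]
  · exact Finset.prod_congr rfl fun i hi => by
      rw [(hε i).resolve_left (Finset.mem_filter.1 hi).2, zpow_neg_one]

end Helpers

/-- For a pseudo-convergent sequence E of algebraic type with pseudo-limit β in an
algebraically closed rank one valued field, and φ nonzero with dominating degree λ
(the weighted sum of critical points of φ that are pseudo-limits of E), there is
γ ∈ v(K*) with v(φ(s_n)) = λ·δ_n + γ for all large n, where δ_n = v(s_{n+1} - s_n). -/
theorem stmt8 {K : Type*} [Field K] [IsAlgClosed K]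
    (v : AddValuation K (WithTop ℝ)) (s : ℕ → K)
    (hE : ∀ n, v (s (n + 1) - s n) < v (s (n + 2) - s (n + 1)))
    (β : K) (hβ : ∀ n, v (β - s n) < v (β - s (n + 1)))
    (halg : ∃ f : Polynomial K, ∃ N, ∀ n ≥ N, v (f.eval (s n)) < v (f.eval (s (n + 1))))
    (φ : RatFunc K) (hφ : φ ≠ 0)
    (c : K) (hc : c ≠ 0) {m : ℕ} (α : Fin m → K) (ε : Fin m → ℤ)
    (hε : ∀ i, ε i = 1 ∨ ε i = -1)
    (hfact : φ = RatFunc.C c * ∏ i, (RatFunc.X - RatFunc.C (α i)) ^ (ε i))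
    (lam : ℤ)
    (hlam : lam = ∑ i ∈ Finset.univ.filter
      (fun i => ∀ n, v (α i - s n) < v (α i - s (n + 1))), ε i) :
    ∃ γ : K, γ ≠ 0 ∧ ∃ N, ∀ n ≥ N,
      v (RatFunc.eval (RingHom.id K) (s n) φ) = lam • v (s (n + 1) - s n) + v γ := by
  classical
  set δ : ℕ → WithTop ℝ := fun n => v (s (n + 1) - s n) with hδdef
  have hδmono : StrictMono δ := strictMono_nat_of_lt_succ hE
  have hδtop : ∀ n, δ n ≠ ⊤ := fun n => (lt_of_lt_of_le (hE n) le_top).ne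
  set d : ℕ → ℝ := fun n => (δ n).untop (hδtop n) with hddef
  have hδd : ∀ n, δ n = ((d n : ℝ) : WithTop ℝ) := fun n => (WithTop.coe_untop _ _).symm
  -- pseudo-limit values
  have hPL : ∀ x : K, (∀ n, v (x - s n) < v (x - s (n + 1))) → ∀ n, v (x - s n) = δ n := by
    intro x hx n
    have hne : v (x - s (n + 1)) ≠ δ n := by
      intro h
      have h2 := v.map_add (x - s (n + 1)) (s (n + 1) - s n)
      rw [sub_add_sub_cancel] at h2
      rw [show v (s (n + 1) - s n) = δ n from rfl, h, min_self] at h2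
      exact absurd (hx n) (not_lt.2 (h ▸ h2))
    have key : v (x - s n) = min (v (x - s (n + 1))) (δ n) := by
      have h3 := v.map_add_of_distinct_val (x := x - s (n + 1)) (y := s (n + 1) - s n) hne
      rwa [sub_add_sub_cancel] at h3
    rcases le_or_gt (v (x - s (n + 1))) (δ n) with h | h
    · exfalso
      have h4 : v (x - s n) = v (x - s (n + 1)) := by rw [key, min_eq_left h]
      exact absurd (hx n) (h4 ▸ lt_irrefl _)
    · rw [key, min_eq_right h.le]
  -- non-pseudo-limit: eventually constant, finite
  have hNPL : ∀ x : K, ¬(∀ n, v (x - s n) < v (x - s (n + 1))) →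
      ∃ N, v (x - s N) ≠ ⊤ ∧ ∀ n ≥ N, v (x - s n) = v (x - s N) := by
    intro x hx
    have hex : ∃ n₀, v (x - s n₀) ≠ δ n₀ := by
      by_contra h
      push_neg at h
      exact hx fun n => by
        rw [h n, h (n + 1)]; exact hδmono (Nat.lt_succ_self n)
    obtain ⟨n₀, hn₀⟩ := hex
    set w := min (v (x - s n₀)) (δ n₀) with hw
    have hwle : w ≤ δ n₀ := min_le_right _ _
    have hwtop : w ≠ ⊤ := (lt_of_le_of_lt hwle (lt_top_iff_ne_top.2 (hδtop n₀))).ne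
    have hstep : ∀ y : K, ∀ k, v y ≠ δ k → v (y - (s (k + 1) - s k)) = min (v y) (δ k) := by
      intro y k hy
      have hne : v y ≠ v (-(s (k + 1) - s k)) := by rwa [v.map_neg]
      have h3 := v.map_add_of_distinct_val hne
      rw [v.map_neg] at h3
      rw [sub_eq_add_neg]
      exact h3
    have hconst : ∀ n, n₀ + 1 ≤ n → v (x - s n) = w := by
      intro n hn
      induction n, hn using Nat.le_induction with
      | base =>
          have h4 := hstep (x - s n₀) n₀ hn₀
          rw [show x - s n₀ - (s (n₀ + 1) - s n₀) = x - s (n₀ + 1) by ring] at h4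
          exact h4
      | succ n hn ih =>
          have hne : v (x - s n) ≠ δ n := by
            rw [ih]
            exact (lt_of_le_of_lt hwle (hδmono (Nat.lt_of_succ_le hn))).ne
          have h4 := hstep (x - s n) n hne
          rw [show x - s n - (s (n + 1) - s n) = x - s (n + 1) by ring, ih, min_eq_left] at h4
          · exact h4
          · exact le_of_lt (lt_of_le_of_lt hwle (hδmono (Nat.lt_of_succ_le hn)))
    refine ⟨n₀ + 1, ?_, fun n hn => by rw [hconst n hn, hconst (n₀ + 1) le_rfl]⟩
    rw [hconst (n₀ + 1) le_rfl]
    exact hwtop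
  -- the pseudo-limit predicate on critical points
  set pred : Fin m → Prop := fun i => ∀ n, v (α i - s n) < v (α i - s (n + 1)) with hpreddef
  have hchoice : ∀ i : Fin m, ¬pred i →
      ∃ N, v (α i - s N) ≠ ⊤ ∧ ∀ n ≥ N, v (α i - s n) = v (α i - s N) :=
    fun i hi => hNPL (α i) hi
  set Nf : Fin m → ℕ := fun i => if h : pred i then 0 else (hchoice i h).choose with hNfdef
  set N : ℕ := Finset.univ.sup Nf with hNdef
  have hNfN : ∀ i : Fin m, Nf i ≤ N := fun i => Finset.le_sup (Finset.mem_univ i)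
  have hWspec : ∀ i : Fin m, (h : ¬pred i) → v (α i - s (Nf i)) ≠ ⊤ ∧
      ∀ n ≥ Nf i, v (α i - s n) = v (α i - s (Nf i)) := by
    intro i h
    have h1 : Nf i = (hchoice i h).choose := by rw [hNfdef]; exact dif_neg h
    rw [h1]
    exact (hchoice i h).choose_spec
  -- nonvanishing of factors for n ≥ N
  have hne0 : ∀ i : Fin m, ∀ n ≥ N, s n - α i ≠ 0 := by
    intro i n hn
    apply stmt8_ne_zero v
    rw [v.map_sub_swap]
    by_cases h : pred i
    · rw [hPL (α i) h n]; exact hδtop n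
    · rw [(hWspec i h).2 n (le_trans (hNfN i) hn)]; exact (hWspec i h).1
  -- polynomials p, q with φ = p / q
  set p : Polynomial K := Polynomial.C c *
    ∏ i ∈ Finset.univ.filter (fun i => ε i = 1), (Polynomial.X - Polynomial.C (α i)) with hpdef
  set q : Polynomial K :=
    ∏ i ∈ Finset.univ.filter (fun i => ¬ε i = 1), (Polynomial.X - Polynomial.C (α i)) with hqdef
  have hq0 : q ≠ 0 := by
    rw [hqdef]
    exact Finset.prod_ne_zero_iff.2 fun i _ => Polynomial.X_sub_C_ne_zero (α i)
  have hφpq : φ = algebraMap (Polynomial K) (RatFunc K) p /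
      algebraMap (Polynomial K) (RatFunc K) q := by
    have halgp : algebraMap (Polynomial K) (RatFunc K) p =
        RatFunc.C c * ∏ i ∈ Finset.univ.filter (fun i => ε i = 1),
          (RatFunc.X - RatFunc.C (α i)) := by
      rw [hpdef, map_mul, map_prod, RatFunc.algebraMap_C]
      congr 1
      exact Finset.prod_congr rfl fun i _ => by
        rw [map_sub, RatFunc.algebraMap_X, RatFunc.algebraMap_C]
    have halgq : algebraMap (Polynomial K) (RatFunc K) q =
        ∏ i ∈ Finset.univ.filter (fun i => ¬ε i = 1), (RatFunc.X - RatFunc.C (α i)) := by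
      rw [hqdef, map_prod]
      exact Finset.prod_congr rfl fun i _ => by
        rw [map_sub, RatFunc.algebraMap_X, RatFunc.algebraMap_C]
    rw [halgp, halgq, hfact,
      stmt8_split_zpow (fun i => RatFunc.X - RatFunc.C (α i)) ε hε, mul_div_assoc]
  have hpeval : ∀ n, p.eval (s n) =
      c * ∏ i ∈ Finset.univ.filter (fun i => ε i = 1), (s n - α i) := by
    intro n
    rw [hpdef]
    simp [Polynomial.eval_prod]
  have hqeval : ∀ n, q.eval (s n) =
      ∏ i ∈ Finset.univ.filter (fun i => ¬ε i = 1), (s n - α i) := by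
    intro n
    rw [hqdef]
    simp [Polynomial.eval_prod]
  -- cross-multiplication identity
  have hdd : algebraMap (Polynomial K) (RatFunc K) φ.num /
      algebraMap (Polynomial K) (RatFunc K) φ.denom =
      algebraMap (Polynomial K) (RatFunc K) p / algebraMap (Polynomial K) (RatFunc K) q := by
    rw [RatFunc.num_div_denom]; exact hφpq
  rw [div_eq_div_iff (RatFunc.algebraMap_ne_zero (RatFunc.denom_ne_zero φ))
    (RatFunc.algebraMap_ne_zero hq0)] at hdd
  have hcross : φ.num * q = p * φ.denom :=
    RatFunc.algebraMap_injective K (by rw [map_mul, map_mul]; exact hdd)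
  -- evaluation of φ at s n, for n ≥ N
  have hevalφ : ∀ n ≥ N, RatFunc.eval (RingHom.id K) (s n) φ =
      c * ∏ i, (s n - α i) ^ (ε i) := by
    intro n hn
    have hqn : q.eval (s n) ≠ 0 := by
      rw [hqeval]
      exact Finset.prod_ne_zero_iff.2 fun i _ => hne0 i n hn
    have hdvd : φ.denom ∣ q := (RatFunc.denom_dvd hq0).2 ⟨p, hφpq⟩
    have hdenomn : (φ.denom).eval (s n) ≠ 0 := by
      obtain ⟨t, ht⟩ := hdvd
      intro h0
      apply hqn
      rw [ht, Polynomial.eval_mul, h0, zero_mul]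
    have heval : RatFunc.eval (RingHom.id K) (s n) φ = p.eval (s n) / q.eval (s n) := by
      unfold RatFunc.eval
      have h1 : ∀ r : Polynomial K, r.eval₂ (RingHom.id K) (s n) = r.eval (s n) := fun r => rfl
      rw [h1, h1, div_eq_div_iff hdenomn hqn]
      have h2 := congrArg (Polynomial.eval (s n)) hcross
      simpa [Polynomial.eval_mul] using h2
    rw [heval, hpeval n, hqeval n, mul_div_assoc,
      ← stmt8_split_zpow (fun i => s n - α i) ε hε]
  -- real values of the stable factors
  set vc : ℝ := (v c).untop (stmt8_ne_top v hc) with hvcdef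
  have hvc : v c = ((vc : ℝ) : WithTop ℝ) := (WithTop.coe_untop _ _).symm
  set W : Fin m → ℝ := fun i => if h : pred i then 0 else
    (v (α i - s (Nf i))).untop (hWspec i h).1 with hWdef
  have hfval : ∀ n ≥ N, ∀ i : Fin m, v ((s n - α i) ^ ε i) =
      (((ε i : ℝ) * (if pred i then d n else W i) : ℝ) : WithTop ℝ) := by
    intro n hn i
    by_cases h : pred i
    · have hx : v (s n - α i) = ((d n : ℝ) : WithTop ℝ) := by
        rw [v.map_sub_swap, hPL (α i) h n, hδd]
      rw [stmt8_val_zpow v hx (hε i), if_pos h]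
    · have hW : v (α i - s (Nf i)) = ((W i : ℝ) : WithTop ℝ) := by
        rw [hWdef]
        simp only [dif_neg h]
        exact (WithTop.coe_untop _ _).symm
      have hx : v (s n - α i) = ((W i : ℝ) : WithTop ℝ) := by
        rw [v.map_sub_swap, (hWspec i h).2 n (le_trans (hNfN i) hn), hW]
      rw [stmt8_val_zpow v hx (hε i), if_neg h]
  -- define γ
  refine ⟨c * ∏ i ∈ Finset.univ.filter (fun i => ¬pred i), (s N - α i) ^ ε i, ?_, N, ?_⟩
  · exact mul_ne_zero hc (Finset.prod_ne_zero_iff.2 fun i _ =>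
      zpow_ne_zero _ (hne0 i N le_rfl))
  intro n hn
  have hvγ : v (c * ∏ i ∈ Finset.univ.filter (fun i => ¬pred i), (s N - α i) ^ ε i) =
      ((vc + ∑ i ∈ Finset.univ.filter (fun i => ¬pred i), (ε i : ℝ) * W i : ℝ) : WithTop ℝ) := by
    rw [v.map_mul, stmt8_val_prod, hvc]
    have h1 : ∀ i ∈ Finset.univ.filter (fun i => ¬pred i),
        v ((s N - α i) ^ ε i) = (((ε i : ℝ) * W i : ℝ) : WithTop ℝ) := by
      intro i hi
      have h := (Finset.mem_filter.1 hi).2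
      rw [hfval N le_rfl i, if_neg h]
    rw [Finset.sum_congr rfl h1, WithTop.coe_add, stmt8_coe_sum]
  rw [hevalφ n hn, hvγ, v.map_mul, stmt8_val_prod, hvc]
  have h1 : ∀ i ∈ Finset.univ, v ((s n - α i) ^ ε i) =
      (((ε i : ℝ) * (if pred i then d n else W i) : ℝ) : WithTop ℝ) :=
    fun i _ => hfval n hn i
  rw [Finset.sum_congr rfl h1, ← stmt8_coe_sum, ← WithTop.coe_add]
  have hδn : v (s (n + 1) - s n) = ((d n : ℝ) : WithTop ℝ) := hδd n
  rw [hδn, stmt8_coe_zsmul, ← WithTop.coe_add, WithTop.coe_eq_coe]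
  -- now a real-number identity
  rw [← Finset.sum_filter_add_sum_filter_not Finset.univ pred
    (fun i => (ε i : ℝ) * (if pred i then d n else W i))]
  have h2 : ∑ i ∈ Finset.univ.filter pred, (ε i : ℝ) * (if pred i then d n else W i)
      = (lam : ℝ) * d n := by
    rw [Finset.sum_congr rfl (fun i hi => by
      rw [if_pos (Finset.mem_filter.1 hi).2]), ← Finset.sum_mul]
    congr 1
    rw [hlam]
    push_cast
    rfl
  have h3 : ∑ i ∈ Finset.univ.filter (fun i => ¬pred i),
      (ε i : ℝ) * (if pred i then d n else W i)
      = ∑ i ∈ Finset.univ.filter (fun i => ¬pred i), (ε i : ℝ) * W i :=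
    Finset.sum_congr rfl (fun i hi => by rw [if_neg (Finset.mem_filter.1 hi).2])
  rw [h2, h3, zsmul_eq_mul]
  ring
end

section
/- Let E = {s_n} ⊂ K be a pseudo-convergent sequence with pseudo-limit β ∈ K, and let f(X) = Σ_{i=0}^{d} a_i (X - β)^i ∈ K[X]. Then there exists a unique k ∈ {0,...,d} and N ∈ ℕ such that for all n ≥ N, v(f(s_n)) = v(a_k) + k·v(s_n - β), and moreover v(a_k) + k·δ_n < v(a_i) + i·δ_n for all i ≠ k with a_i ≠ 0 and all n ≥ N, where δ_n = v(s_n - β). -/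
/-- Abstract eventual-argmin lemma for a finite family of sequences that are
eventually pairwise strictly comparable. -/
lemma exists_eventual_min {α ι : Type*} [LinearOrder α] [DecidableEq ι]
    (S : Finset ι) (hS : S.Nonempty) (ℓ : ι → ℕ → α)
    (hp : ∀ i ∈ S, ∀ j ∈ S, i ≠ j →
      ∃ N, (∀ n ≥ N, ℓ i n < ℓ j n) ∨ (∀ n ≥ N, ℓ j n < ℓ i n)) :
    ∃ k ∈ S, ∃ N, ∀ n ≥ N, ∀ i ∈ S, i ≠ k → ℓ k n < ℓ i n := by
  induction S using Finset.cons_induction with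
  | empty => exact absurd hS (by simp)
  | cons j S hj IH =>
    by_cases hSne : S.Nonempty
    · obtain ⟨k', hk'S, N', hN'⟩ := IH hSne fun i hi j' hj' hij =>
        hp i (Finset.mem_cons_of_mem hi) j' (Finset.mem_cons_of_mem hj') hij
      have hjk' : j ≠ k' := fun h => hj (h ▸ hk'S)
      obtain ⟨N₂, hc⟩ := hp j (Finset.mem_cons_self j S) k'
        (Finset.mem_cons_of_mem hk'S) hjk'
      rcases hc with hjlt | hk'lt
      · refine ⟨j, Finset.mem_cons_self j S, max N' N₂, fun n hn i hi hij => ?_⟩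
        rcases Finset.mem_cons.mp hi with rfl | hiS
        · exact absurd rfl hij
        by_cases hik' : i = k'
        · exact hik' ▸ hjlt n (le_trans (le_max_right _ _) hn)
        · exact lt_trans (hjlt n (le_trans (le_max_right _ _) hn))
            (hN' n (le_trans (le_max_left _ _) hn) i hiS hik')
      · refine ⟨k', Finset.mem_cons_of_mem hk'S, max N' N₂, fun n hn i hi hik => ?_⟩
        rcases Finset.mem_cons.mp hi with rfl | hiS
        · exact hk'lt n (le_trans (le_max_right _ _) hn)
        · exact hN' n (le_trans (le_max_left _ _) hn) i hiS hik
    · refine ⟨j, Finset.mem_cons_self j S, 0, fun n _ i hi hij => ?_⟩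
      rcases Finset.mem_cons.mp hi with rfl | hiS
      · exact absurd rfl hij
      · exact absurd ⟨i, hiS⟩ hSne

/-- Dominating degree of a polynomial: if E = {s_n} is pseudo-convergent with
pseudo-limit β and f(X) = Σ a_i (X - β)^i is nonzero, there is a unique
k ∈ {0,...,d} (and some N) such that v(f(s_n)) = v(a_k) + k·v(s_n - β) for all
n ≥ N, and v(a_k) + k·δ_n < v(a_i) + i·δ_n for all i ≠ k with a_i ≠ 0,
where δ_n = v(s_n - β). -/
theorem stmt9 {K Γ : Type*} [Field K] [AddCommGroup Γ] [LinearOrder Γ]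
    [IsOrderedAddMonoid Γ]
    (v : AddValuation K (WithTop Γ)) (s : ℕ → K)
    (hE : ∀ n, v (s (n + 1) - s n) < v (s (n + 2) - s (n + 1)))
    (β : K) (hβ : ∀ n, v (β - s n) < v (β - s (n + 1)))
    (d : ℕ) (a : ℕ → K) (hne : ∃ i ≤ d, a i ≠ 0) :
    ∃! k : ℕ, k ≤ d ∧ ∃ N, ∀ n ≥ N,
      v (∑ i ∈ Finset.range (d + 1), a i * (s n - β) ^ i) =
          v (a k) + k • v (s n - β) ∧
      ∀ i ≤ d, i ≠ k → a i ≠ 0 →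
        v (a k) + k • v (s n - β) < v (a i) + i • v (s n - β) := by
  classical
  set δ : ℕ → WithTop Γ := fun n => v (s n - β) with hδdef
  have hδeq : ∀ n, δ n = v (β - s n) := fun n => by
    rw [hδdef, ← AddValuation.map_neg v, neg_sub]
  have hδmono : StrictMono δ := strictMono_nat_of_lt_succ fun n => by
    rw [hδeq n, hδeq (n + 1)]; exact hβ n
  -- each δ n is finite
  have hδtop : ∀ n, δ n ≠ ⊤ := fun n =>
    (lt_of_lt_of_le (hδmono (Nat.lt_succ_self n)) le_top).ne
  set ℓ : ℕ → ℕ → WithTop Γ := fun i n => v (a i) + i • δ n with hℓdef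
  -- ℓ i n is finite when a i ≠ 0
  have hℓtop : ∀ i n, a i ≠ 0 → ℓ i n ≠ ⊤ := by
    intro i n hai
    obtain ⟨c, hc⟩ := Option.ne_none_iff_exists'.mp (hδtop n)
    obtain ⟨b, hb⟩ := Option.ne_none_iff_exists'.mp ((v.ne_top_iff).mpr hai)
    rw [hℓdef]
    simp only [hb, hc, ← WithTop.coe_nsmul, ← WithTop.coe_add]
    exact WithTop.coe_ne_top
  -- crossing lemma: if i < j and ℓ i n ≤ ℓ j n, then strictly less for all m > n
  have cross : ∀ i j n m, i < j → a j ≠ 0 → n < m → ℓ i n ≤ ℓ j n → ℓ i m < ℓ j m := by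
    intro i j n m hij haj hnm hle
    obtain ⟨c, hc⟩ := WithTop.ne_top_iff_exists.mp (hδtop n)
    obtain ⟨c', hc'⟩ := WithTop.ne_top_iff_exists.mp (hδtop m)
    obtain ⟨b, hb⟩ := WithTop.ne_top_iff_exists.mp ((v.ne_top_iff).mpr haj)
    have hcc' : c < c' := by
      have := hδmono hnm
      rw [← hc, ← hc'] at this
      exact_mod_cast this
    -- v (a i) must be finite
    have hvai : v (a i) ≠ ⊤ := by
      intro htop
      simp only [hℓdef, htop, top_add, top_le_iff, ← hb, ← hc, ← WithTop.coe_nsmul,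
        ← WithTop.coe_add] at hle
      exact WithTop.coe_ne_top hle
    obtain ⟨ai, hai⟩ := WithTop.ne_top_iff_exists.mp hvai
    simp only [hℓdef] at hle ⊢
    rw [← hai, ← hb, ← hc, ← WithTop.coe_nsmul, ← WithTop.coe_nsmul, ← WithTop.coe_add,
      ← WithTop.coe_add, WithTop.coe_le_coe] at hle
    rw [← hai, ← hb, ← hc', ← WithTop.coe_nsmul, ← WithTop.coe_nsmul, ← WithTop.coe_add,
      ← WithTop.coe_add, WithTop.coe_lt_coe]
    set e := j - i with he
    have hje : j = i + e := by omega
    have he0 : e ≠ 0 := by omega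
    have hsplit : ∀ x : Γ, j • x = e • x + i • x := by
      intro x; rw [hje, add_nsmul]; exact add_comm _ _
    rw [hsplit c] at hle
    have h1 : ai ≤ b + e • c := by
      have := hle
      rw [← add_assoc] at this
      exact le_of_add_le_add_right this
    have h2 : e • c < e • c' := nsmul_lt_nsmul_right he0 hcc'
    have h3 : ai < b + e • c' := lt_of_le_of_lt h1 (by exact add_lt_add_right h2 b)
    calc ai + i • c' < (b + e • c') + i • c' := add_lt_add_left h3 _
      _ = b + j • c' := by rw [hsplit c', add_assoc]
  -- pairwise eventual comparability
  have pair : ∀ i j, a i ≠ 0 → a j ≠ 0 → i ≠ j →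
      ∃ N, (∀ n ≥ N, ℓ i n < ℓ j n) ∨ (∀ n ≥ N, ℓ j n < ℓ i n) := by
    have key : ∀ i j, i < j → a i ≠ 0 → a j ≠ 0 →
        ∃ N, (∀ n ≥ N, ℓ i n < ℓ j n) ∨ (∀ n ≥ N, ℓ j n < ℓ i n) := by
      intro i j hij hai haj
      by_cases h : ∃ n, ℓ i n ≤ ℓ j n
      · obtain ⟨n₀, hn₀⟩ := h
        exact ⟨n₀ + 1, Or.inl fun n hn =>
          cross i j n₀ n hij haj (by omega) hn₀⟩
      · push_neg at h
        exact ⟨0, Or.inr fun n _ => h n⟩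
    intro i j hai haj hij
    rcases lt_or_gt_of_ne hij with h | h
    · exact key i j h hai haj
    · obtain ⟨N, hN⟩ := key j i h haj hai
      exact ⟨N, hN.symm⟩
  -- the set of nonzero coefficient indices
  set S : Finset ℕ := (Finset.range (d + 1)).filter (fun i => a i ≠ 0) with hSdef
  have hSne : S.Nonempty := by
    obtain ⟨i, hid, hai⟩ := hne
    exact ⟨i, Finset.mem_filter.mpr ⟨Finset.mem_range.mpr (by omega), hai⟩⟩
  have hSmem : ∀ i, i ∈ S ↔ i ≤ d ∧ a i ≠ 0 := by
    intro i
    rw [hSdef, Finset.mem_filter, Finset.mem_range, Nat.lt_succ_iff]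
  obtain ⟨k, hkS, N, hN⟩ := exists_eventual_min S hSne ℓ
    (fun i hi j hj hij => pair i j ((hSmem i).mp hi).2 ((hSmem j).mp hj).2 hij)
  obtain ⟨hkd, hak⟩ := (hSmem k).mp hkS
  -- the minimality over all i ≤ d, i ≠ k, a i ≠ 0
  have hmin : ∀ n ≥ N, ∀ i ≤ d, i ≠ k → a i ≠ 0 →
      ℓ k n < ℓ i n := fun n hn i hid hik hai =>
    hN n hn i ((hSmem i).mpr ⟨hid, hai⟩) hik
  refine ⟨k, ⟨hkd, N, fun n hn => ⟨?_, fun i hid hik hai => hmin n hn i hid hik hai⟩⟩, ?_⟩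
  · -- value of the sum
    have hkr : k ∈ Finset.range (d + 1) := Finset.mem_range.mpr (by omega)
    have hterm : ∀ i, v (a i * (s n - β) ^ i) = ℓ i n := fun i => by
      rw [AddValuation.map_mul, AddValuation.map_pow]
    rw [Finset.sum_eq_add_sum_sdiff_singleton_of_mem hkr (fun i => a i * (s n - β) ^ i)]
    have hlt : v (a k * (s n - β) ^ k) <
        v (∑ i ∈ Finset.range (d + 1) \ {k}, a i * (s n - β) ^ i) := by
      rw [hterm k]
      refine AddValuation.map_lt_sum v (hℓtop k n hak) ?_
      intro i hi
      obtain ⟨hir, hik⟩ := Finset.mem_sdiff.mp hi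
      have hid : i ≤ d := Nat.lt_succ_iff.mp (Finset.mem_range.mp hir)
      have hik' : i ≠ k := fun h => (Finset.mem_singleton.mpr h) |> hik
      by_cases hai : a i = 0
      · rw [hai, zero_mul, AddValuation.map_zero]
        exact lt_top_iff_ne_top.mpr (hℓtop k n hak)
      · rw [hterm i]
        exact hmin n hn i hid hik' hai
    rw [AddValuation.map_add_eq_of_lt_left v hlt]
    exact hterm k
  · -- uniqueness
    intro k' ⟨hk'd, N', hN'⟩
    have hak' : a k' ≠ 0 := by
      by_contra hz
      obtain ⟨i, hid, hai⟩ := hne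
      have hik' : i ≠ k' := fun h => hai (h ▸ hz)
      have := (hN' N' le_rfl).2 i hid hik' hai
      rw [hz, AddValuation.map_zero, top_add] at this
      exact not_top_lt this
    by_contra hkk'
    have h1 := hmin (max N N') (le_max_left _ _) k' hk'd hkk' hak'
    have h2 := (hN' (max N N') (le_max_right _ _)).2 k hkd (Ne.symm hkk') hak
    exact absurd (lt_trans h1 h2) (lt_irrefl _)
end

section
/- Let V be a valuation domain with valuation v and quotient field K, let E = {s_n} be a pseudo-convergent sequence of algebraic type in K, and let V_E = {φ ∈ K(X) : φ(s_n) ∈ V for all but finitely many n}. Then V_E is a valuation ring of K(X): for every nonzero φ ∈ K(X), either φ ∈ V_E or φ^{-1} ∈ V_E. -/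
open Filter

/-- Membership in V_E: φ(s_n) is defined and lies in V for all but finitely many n. -/
def memVE {K Γ : Type*} [Field K] [AddCommGroup Γ] [LinearOrder Γ] [IsOrderedAddMonoid Γ]
    (v : AddValuation K (WithTop Γ)) (s : ℕ → K) (φ : RatFunc K) : Prop :=
  ∀ᶠ n in atTop, (RatFunc.denom φ).eval (s n) ≠ 0 ∧
    0 ≤ v (RatFunc.eval (RingHom.id K) (s n) φ)

namespace Stmt10Aux

open Polynomial

/-- cancellation iff in a linearly ordered commutative group with zero -/
lemma mul_le_mul_right_iff' {G : Type*} [LinearOrderedCommGroupWithZero G] {a b c : G}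
    (hc : c ≠ 0) : a * c ≤ b * c ↔ a ≤ b := by
  constructor
  · intro h
    have := mul_le_mul_left h c⁻¹
    simpa [mul_assoc, mul_inv_cancel₀ hc] using this
  · intro h
    exact mul_le_mul_left h c

lemma val_div_le_one_iff {L : Type*} [Field L] (B : ValuationSubring L) {a b : L} (hb : b ≠ 0) :
    B.valuation (a / b) ≤ 1 ↔ B.valuation a ≤ B.valuation b := by
  have hwb : B.valuation b ≠ 0 := (Valuation.ne_zero_iff _).mpr hb
  rw [← mul_le_mul_right_iff' (c := B.valuation b) hwb, one_mul, ← map_mul,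
    div_mul_cancel₀ a hb]

lemma coe_le_add_iff {Γ : Type*} [AddCommGroup Γ] [LinearOrder Γ] [IsOrderedAddMonoid Γ] (γ : Γ) (x : WithTop Γ) :
    (γ : WithTop Γ) ≤ x + γ ↔ 0 ≤ x := by
  cases x with
  | top => simp
  | coe x =>
    rw [← WithTop.coe_add, WithTop.coe_le_coe,
      show ((0 : WithTop Γ) = ((0 : Γ) : WithTop Γ)) from rfl, WithTop.coe_le_coe]
    exact le_add_iff_nonneg_left γ

variable {K Γ : Type*} [Field K] [AddCommGroup Γ] [LinearOrder Γ] [IsOrderedAddMonoid Γ]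

/-- The valuation subring of `v`. -/
def VS (v : AddValuation K (WithTop Γ)) : ValuationSubring K where
  carrier := {x | 0 ≤ v x}
  mul_mem' {a b} ha hb := by
    have : (0 : WithTop Γ) ≤ v a + v b := add_nonneg ha hb
    simpa [Set.mem_setOf_eq, v.map_mul] using this
  one_mem' := by simp [Set.mem_setOf_eq, v.map_one]
  add_mem' {a b} ha hb := le_trans (le_min ha hb) (v.map_add a b)
  zero_mem' := by simp [Set.mem_setOf_eq, v.map_zero]
  neg_mem' {a} ha := by simpa [Set.mem_setOf_eq, v.map_neg] using ha
  mem_or_inv_mem' x := by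
    rcases le_or_gt 0 (v x) with h | h
    · exact Or.inl h
    · right
      by_cases hx : x = 0
      · simp [Set.mem_setOf_eq, hx, v.map_zero]
      have hxi : x⁻¹ ≠ 0 := inv_ne_zero hx
      obtain ⟨γ, hγ⟩ := WithTop.ne_top_iff_exists.mp ((v.ne_top_iff).mpr hx)
      obtain ⟨δ, hδ⟩ := WithTop.ne_top_iff_exists.mp ((v.ne_top_iff).mpr hxi)
      have hsum : v x⁻¹ + v x = 0 := by
        rw [← v.map_mul, inv_mul_cancel₀ hx, v.map_one]
      rw [← hγ, ← hδ, ← WithTop.coe_add,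
        show ((0 : WithTop Γ) = ((0 : Γ) : WithTop Γ)) from rfl, WithTop.coe_eq_coe] at hsum
      have hγ0 : (γ : WithTop Γ) < 0 := hγ ▸ h
      rw [show ((0 : WithTop Γ) = ((0 : Γ) : WithTop Γ)) from rfl, WithTop.coe_lt_coe] at hγ0
      have hδγ : δ = -γ := by
        rwa [add_eq_zero_iff_eq_neg] at hsum
      have h0δ : (0 : Γ) ≤ δ := by rw [hδγ]; exact neg_nonneg.mpr hγ0.le
      show (0 : WithTop Γ) ≤ v x⁻¹
      rw [← hδ, show ((0 : WithTop Γ) = ((0 : Γ) : WithTop Γ)) from rfl, WithTop.coe_le_coe]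
      exact h0δ

lemma mem_VS (v : AddValuation K (WithTop Γ)) {x : K} : x ∈ VS v ↔ 0 ≤ v x := Iff.rfl

/-- Extension of the valuation subring to the algebraic closure. -/
lemma exists_B (v : AddValuation K (WithTop Γ)) :
    ∃ B : ValuationSubring (AlgebraicClosure K),
      ∀ x : K, (0 ≤ v x ↔ B.valuation (algebraMap K (AlgebraicClosure K) x) ≤ 1) := by
  have hι : Function.Injective (algebraMap K (AlgebraicClosure K)) :=
    (algebraMap K (AlgebraicClosure K)).injective
  obtain ⟨B, hle, hloc⟩ :=
    LocalSubring.exists_le_valuationSubring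
      ((VS v).toLocalSubring.map (algebraMap K (AlgebraicClosure K)))
  refine ⟨B, fun x => ?_⟩
  constructor
  · intro hx
    exact (B.valuation_le_one_iff _).mpr (hle (Subring.mem_map.mpr ⟨x, hx, rfl⟩))
  · intro hx
    rw [B.valuation_le_one_iff] at hx
    by_contra hxO
    have hx0 : x ≠ 0 := by
      rintro rfl
      exact hxO ((VS v).zero_mem)
    have hxi : x⁻¹ ∈ VS v := ((VS v).mem_or_inv_mem x).resolve_left hxO
    have hmemA : algebraMap K (AlgebraicClosure K) x⁻¹ ∈
        ((VS v).toLocalSubring.map (algebraMap K (AlgebraicClosure K))).toSubring :=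
      Subring.mem_map.mpr ⟨x⁻¹, hxi, rfl⟩
    have hunit : IsUnit (Subring.inclusion hle
        (⟨algebraMap K (AlgebraicClosure K) x⁻¹, hmemA⟩ :
          ((VS v).toLocalSubring.map (algebraMap K (AlgebraicClosure K))).toSubring)) := by
      refine isUnit_iff_exists_inv.mpr ⟨⟨algebraMap K (AlgebraicClosure K) x, hx⟩, ?_⟩
      ext
      show algebraMap K (AlgebraicClosure K) x⁻¹ * algebraMap K (AlgebraicClosure K) x = 1
      rw [← map_mul, inv_mul_cancel₀ hx0, map_one]
    have hu := hloc.map_nonunit _ hunit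
    obtain ⟨y, hy⟩ := isUnit_iff_exists_inv.mp hu
    have hy1 : algebraMap K (AlgebraicClosure K) x⁻¹ * (y : AlgebraicClosure K) = 1 :=
      congrArg Subtype.val hy
    have hy2 : (algebraMap K (AlgebraicClosure K) x⁻¹)⁻¹ = (y : AlgebraicClosure K) :=
      inv_eq_of_mul_eq_one_right hy1
    have hyx : (y : AlgebraicClosure K) = algebraMap K (AlgebraicClosure K) x := by
      rw [← hy2, map_inv₀, inv_inv]
    obtain ⟨z, hz, hzx⟩ := Subring.mem_map.mp y.2
    rw [hyx] at hzx
    have hzx' : z = x := hι hzx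
    exact hxO (hzx' ▸ hz)

section WithB

variable (v : AddValuation K (WithTop Γ)) (B : ValuationSubring (AlgebraicClosure K))

lemma val_le_iff
    (hB : ∀ x : K, (0 ≤ v x ↔ B.valuation (algebraMap K (AlgebraicClosure K) x) ≤ 1))
    (a b : K) :
    v a ≤ v b ↔ B.valuation (algebraMap K (AlgebraicClosure K) b) ≤
      B.valuation (algebraMap K (AlgebraicClosure K) a) := by
  by_cases ha : a = 0
  · subst ha
    rw [v.map_zero, map_zero, map_zero]
    constructor
    · intro h
      have hb : b = 0 := (v.top_iff).mp (top_le_iff.mp h)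
      simp [hb]
    · intro h
      have h0 : B.valuation (algebraMap K (AlgebraicClosure K) b) = 0 := le_zero_iff.mp h
      have hb : b = 0 := by
        have := (Valuation.zero_iff _).mp h0
        exact (map_eq_zero_iff _ (algebraMap K (AlgebraicClosure K)).injective).mp this
      simp [hb, v.map_zero]
  · have hιa : algebraMap K (AlgebraicClosure K) a ≠ 0 := by
      simpa [map_eq_zero_iff _ (algebraMap K (AlgebraicClosure K)).injective] using ha
    have h1 : (0 : WithTop Γ) ≤ v (b / a) ↔
        B.valuation (algebraMap K (AlgebraicClosure K) (b / a)) ≤ 1 := hB _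
    rw [show algebraMap K (AlgebraicClosure K) (b / a)
        = algebraMap K (AlgebraicClosure K) b / algebraMap K (AlgebraicClosure K) a from
        map_div₀ _ b a, val_div_le_one_iff B hιa] at h1
    have hb' : v b = v (b / a) + v a := by
      rw [← v.map_mul, div_mul_cancel₀ b ha]
    obtain ⟨γ, hγ⟩ := WithTop.ne_top_iff_exists.mp ((v.ne_top_iff).mpr ha)
    rw [hb', ← hγ, coe_le_add_iff]
    exact h1

lemma val_lt_iff
    (hB : ∀ x : K, (0 ≤ v x ↔ B.valuation (algebraMap K (AlgebraicClosure K) x) ≤ 1))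
    (a b : K) :
    v a < v b ↔ B.valuation (algebraMap K (AlgebraicClosure K) b) <
      B.valuation (algebraMap K (AlgebraicClosure K) a) := by
  rw [lt_iff_not_ge, val_le_iff v B hB b a, not_le]

variable (s : ℕ → K)

/-- the gauge sequence in the algebraic closure -/
noncomputable def gg (n : ℕ) : B.ValueGroup :=
  B.valuation (algebraMap K (AlgebraicClosure K) (s (n + 1) - s n))

lemma gg_def (n : ℕ) :
    gg B s n = B.valuation (algebraMap K (AlgebraicClosure K) (s (n + 1) - s n)) := rfl

lemma gg_def' (n : ℕ) :
    B.valuation (algebraMap K (AlgebraicClosure K) (s (n + 1))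
      - algebraMap K (AlgebraicClosure K) (s n)) = gg B s n := by
  rw [gg_def, map_sub (algebraMap K (AlgebraicClosure K))]

lemma gg_strictAnti
    (hB : ∀ x : K, (0 ≤ v x ↔ B.valuation (algebraMap K (AlgebraicClosure K) x) ≤ 1))
    (hE : ∀ n, v (s (n + 1) - s n) < v (s (n + 2) - s (n + 1))) :
    StrictAnti (gg B s) := by
  apply strictAnti_nat_of_succ_lt
  intro n
  rw [gg_def, gg_def]
  exact (val_lt_iff v B hB _ _).mp (hE n)

lemma gg_ne_zero
    (hE : ∀ n, v (s (n + 1) - s n) < v (s (n + 2) - s (n + 1))) (n : ℕ) :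
    gg B s n ≠ 0 := by
  rw [gg_def, Valuation.ne_zero_iff]
  have hd : s (n + 1) - s n ≠ 0 := by
    intro h
    have h2 := hE n
    rw [h, v.map_zero] at h2
    exact not_top_lt h2
  intro h0
  exact hd ((algebraMap K (AlgebraicClosure K)).injective (by rw [h0, map_zero]))

end WithB

section Seq

variable (B : ValuationSubring (AlgebraicClosure K)) (s : ℕ → K)

lemma root_dich (hg : StrictAnti (gg B s)) (hgne : ∀ n, gg B s n ≠ 0)
    (θ : AlgebraicClosure K) :
    ∃ N : ℕ, ∃ c : B.ValueGroup, ∃ e : ℕ, c ≠ 0 ∧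
      ∀ n ≥ N, B.valuation (algebraMap K (AlgebraicClosure K) (s n) - θ) = c * gg B s n ^ e := by
  have hstep : ∀ n, algebraMap K (AlgebraicClosure K) (s (n + 1)) - θ =
      (algebraMap K (AlgebraicClosure K) (s n) - θ) +
      (algebraMap K (AlgebraicClosure K) (s (n + 1)) - algebraMap K (AlgebraicClosure K) (s n)) := by
    intro n; ring
  have hconst : ∀ k, gg B s k < B.valuation (algebraMap K (AlgebraicClosure K) (s k) - θ) →
      ∀ n ≥ k, B.valuation (algebraMap K (AlgebraicClosure K) (s n) - θ)
        = B.valuation (algebraMap K (AlgebraicClosure K) (s k) - θ) := by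
    intro k hk n hn
    induction n, hn using Nat.le_induction with
    | base => rfl
    | succ n hn ih =>
      have h1 : B.valuation (algebraMap K (AlgebraicClosure K) (s (n + 1))
          - algebraMap K (AlgebraicClosure K) (s n)) <
          B.valuation (algebraMap K (AlgebraicClosure K) (s n) - θ) := by
        rw [gg_def' B s n, ih]
        exact lt_of_le_of_lt (hg.antitone hn) hk
      rw [hstep n, Valuation.map_add_eq_of_lt_left _ h1]
      exact ih
  by_cases hall : ∀ n, B.valuation (algebraMap K (AlgebraicClosure K) (s n) - θ) = gg B s n
  · exact ⟨0, 1, 1, one_ne_zero, fun n _ => by rw [one_mul, pow_one]; exact hall n⟩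
  · push_neg at hall
    obtain ⟨n, hn⟩ := hall
    rcases hn.lt_or_gt with hlt | hgt
    · -- value < gauge at n: then at n+1 the value is gg n, which exceeds gg (n+1)
      have hb1 : B.valuation (algebraMap K (AlgebraicClosure K) (s (n + 1)) - θ) = gg B s n := by
        have hstep' : algebraMap K (AlgebraicClosure K) (s (n + 1)) - θ =
            (algebraMap K (AlgebraicClosure K) (s (n + 1)) - algebraMap K (AlgebraicClosure K) (s n))
            + (algebraMap K (AlgebraicClosure K) (s n) - θ) := by ring
        rw [hstep', Valuation.map_add_eq_of_lt_left _ (by rw [gg_def' B s n]; exact hlt),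
          gg_def' B s n]
      have hgt1 : gg B s (n + 1) <
          B.valuation (algebraMap K (AlgebraicClosure K) (s (n + 1)) - θ) := by
        rw [hb1]; exact hg (Nat.lt_succ_self n)
      refine ⟨n + 1, B.valuation (algebraMap K (AlgebraicClosure K) (s (n + 1)) - θ), 0, ?_, ?_⟩
      · rw [hb1]; exact hgne n
      · intro m hm
        rw [pow_zero, mul_one]
        exact hconst (n + 1) hgt1 m hm
    · refine ⟨n, B.valuation (algebraMap K (AlgebraicClosure K) (s n) - θ), 0, ?_, ?_⟩
      · exact ne_of_gt (lt_of_le_of_lt zero_le' hgt)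
      · intro m hm
        rw [pow_zero, mul_one]
        exact hconst n hgt m hm

lemma multiset_val (hg : StrictAnti (gg B s)) (hgne : ∀ n, gg B s n ≠ 0)
    (R : Multiset (AlgebraicClosure K)) :
    ∃ N : ℕ, ∃ c : B.ValueGroup, ∃ e : ℕ, c ≠ 0 ∧
      ∀ n ≥ N, (R.map (fun θ => B.valuation
        (algebraMap K (AlgebraicClosure K) (s n) - θ))).prod = c * gg B s n ^ e := by
  induction R using Multiset.induction with
  | empty => exact ⟨0, 1, 0, one_ne_zero, fun n _ => by simp⟩
  | cons a R ih =>
    obtain ⟨N₁, c₁, e₁, hc₁, h₁⟩ := root_dich B s hg hgne a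
    obtain ⟨N₂, c₂, e₂, hc₂, h₂⟩ := ih
    refine ⟨max N₁ N₂, c₁ * c₂, e₁ + e₂, mul_ne_zero hc₁ hc₂, fun n hn => ?_⟩
    rw [Multiset.map_cons, Multiset.prod_cons, h₁ n (le_trans (le_max_left _ _) hn),
      h₂ n (le_trans (le_max_right _ _) hn), pow_add]
    exact mul_mul_mul_comm _ _ _ _

lemma poly_val (hg : StrictAnti (gg B s)) (hgne : ∀ n, gg B s n ≠ 0)
    (f : Polynomial K) (hf : f ≠ 0) :
    ∃ N : ℕ, ∃ c : B.ValueGroup, ∃ e : ℕ, c ≠ 0 ∧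
      ∀ n ≥ N, B.valuation (algebraMap K (AlgebraicClosure K) (f.eval (s n)))
        = c * gg B s n ^ e := by
  have hF0 : f.map (algebraMap K (AlgebraicClosure K)) ≠ 0 := Polynomial.map_ne_zero hf
  have hsplit : f.map (algebraMap K (AlgebraicClosure K)) =
      C (f.map (algebraMap K (AlgebraicClosure K))).leadingCoeff *
      ((f.map (algebraMap K (AlgebraicClosure K))).roots.map (fun a => X - C a)).prod :=
    (IsAlgClosed.splits _).eq_prod_roots
  obtain ⟨N, c, e, hc, h⟩ := multiset_val B s hg hgne
    (f.map (algebraMap K (AlgebraicClosure K))).roots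
  refine ⟨N, B.valuation (f.map (algebraMap K (AlgebraicClosure K))).leadingCoeff * c, e,
    ?_, fun n hn => ?_⟩
  · exact mul_ne_zero ((Valuation.ne_zero_iff _).mpr (leadingCoeff_ne_zero.mpr hF0)) hc
  · have heval : algebraMap K (AlgebraicClosure K) (f.eval (s n))
        = (f.map (algebraMap K (AlgebraicClosure K))).eval
          (algebraMap K (AlgebraicClosure K) (s n)) := by
      rw [eval_map, Polynomial.eval₂_hom]
    rw [heval]
    conv_lhs => rw [hsplit]
    rw [eval_mul, eval_C, map_mul, eval_multiset_prod, Multiset.map_map,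
      map_multiset_prod, Multiset.map_map]
    have hcongr : Multiset.map (⇑B.valuation ∘ eval (algebraMap K (AlgebraicClosure K) (s n))
          ∘ fun a => X - C a) (f.map (algebraMap K (AlgebraicClosure K))).roots
        = Multiset.map (fun θ => B.valuation (algebraMap K (AlgebraicClosure K) (s n) - θ))
          (f.map (algebraMap K (AlgebraicClosure K))).roots := by
      apply Multiset.map_congr rfl
      intro θ _
      simp [Function.comp]
    rw [hcongr, h n hn, mul_assoc]

lemma compare_half (hg : StrictAnti (gg B s))
    (hgne : ∀ n, gg B s n ≠ 0) {c₁ c₂ : B.ValueGroup} {e₁ e₂ : ℕ}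
    (h : e₂ ≤ e₁) :
    (∃ N, ∀ n ≥ N, c₁ * gg B s n ^ e₁ ≤ c₂ * gg B s n ^ e₂) ∨
    (∃ N, ∀ n ≥ N, c₂ * gg B s n ^ e₂ ≤ c₁ * gg B s n ^ e₁) := by
  have hk : e₁ = (e₁ - e₂) + e₂ := (Nat.sub_add_cancel h).symm
  have key : ∀ n, (c₁ * gg B s n ^ e₁ ≤ c₂ * gg B s n ^ e₂ ↔
      c₁ * gg B s n ^ (e₁ - e₂) ≤ c₂) := by
    intro n
    conv_lhs => rw [hk, pow_add, ← mul_assoc]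
    exact mul_le_mul_right_iff' (pow_ne_zero _ (hgne n))
  have hanti : ∀ m n, n ≤ m → c₁ * gg B s m ^ (e₁ - e₂) ≤ c₁ * gg B s n ^ (e₁ - e₂) := by
    intro m n hnm
    exact mul_le_mul_right (pow_le_pow_left' (hg.antitone hnm) _) c₁
  by_cases hex : ∃ n, c₁ * gg B s n ^ (e₁ - e₂) ≤ c₂
  · obtain ⟨n₀, hn₀⟩ := hex
    left
    exact ⟨n₀, fun n hn => (key n).mpr (le_trans (hanti n n₀ hn) hn₀)⟩
  · push_neg at hex
    right
    refine ⟨0, fun n _ => ?_⟩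
    have h2 : c₂ ≤ c₁ * gg B s n ^ (e₁ - e₂) := (hex n).le
    conv_rhs => rw [hk]
    rw [pow_add, ← mul_assoc]
    exact mul_le_mul_left h2 _

lemma compare (hg : StrictAnti (gg B s))
    (hgne : ∀ n, gg B s n ≠ 0) (c₁ c₂ : B.ValueGroup) (e₁ e₂ : ℕ) :
    (∃ N, ∀ n ≥ N, c₁ * gg B s n ^ e₁ ≤ c₂ * gg B s n ^ e₂) ∨
    (∃ N, ∀ n ≥ N, c₂ * gg B s n ^ e₂ ≤ c₁ * gg B s n ^ e₁) := by
  rcases le_total e₂ e₁ with h | h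
  · exact compare_half B s hg hgne h
  · exact (compare_half B s hg hgne h).symm

end Seq

end Stmt10Aux

/-- For a pseudo-convergent sequence E of algebraic type, V_E is a valuation ring
of K(X): for every nonzero φ, either φ ∈ V_E or φ⁻¹ ∈ V_E. -/
theorem stmt10 {K Γ : Type*} [Field K] [AddCommGroup Γ] [LinearOrder Γ] [IsOrderedAddMonoid Γ]
    (v : AddValuation K (WithTop Γ)) (s : ℕ → K)
    (hE : ∀ n, v (s (n + 1) - s n) < v (s (n + 2) - s (n + 1)))
    (halg : ∃ f : Polynomial K, ∃ N, ∀ n ≥ N, v (f.eval (s n)) < v (f.eval (s (n + 1)))) :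
    ∀ φ : RatFunc K, φ ≠ 0 → memVE v s φ ∨ memVE v s φ⁻¹ := by
  classical
  clear halg
  intro φ hφ
  obtain ⟨B, hB⟩ := Stmt10Aux.exists_B v
  have hιinj : Function.Injective (algebraMap K (AlgebraicClosure K)) :=
    (algebraMap K (AlgebraicClosure K)).injective
  have hg : StrictAnti (Stmt10Aux.gg B s) := Stmt10Aux.gg_strictAnti v B s hB hE
  have hgne : ∀ n, Stmt10Aux.gg B s n ≠ 0 := Stmt10Aux.gg_ne_zero v B s hE
  -- helper: nonvanishing of evaluations
  have hnonzero : ∀ (p : Polynomial K) (N : ℕ) (c : B.ValueGroup) (e : ℕ), c ≠ 0 →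
      (∀ n ≥ N, B.valuation (algebraMap K (AlgebraicClosure K) (p.eval (s n)))
        = c * Stmt10Aux.gg B s n ^ e) →
      ∀ n ≥ N, p.eval (s n) ≠ 0 := by
    intro p N c e hc h n hn h0
    have h2 := h n hn
    rw [h0, map_zero, map_zero] at h2
    exact (mul_ne_zero hc (pow_ne_zero _ (hgne n))) h2.symm
  -- helper: translate nonnegativity of v of a quotient
  have hquot : ∀ a b : K, b ≠ 0 →
      (B.valuation (algebraMap K (AlgebraicClosure K) a)
        ≤ B.valuation (algebraMap K (AlgebraicClosure K) b) → 0 ≤ v (a / b)) := by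
    intro a b hb hab
    have hιb : algebraMap K (AlgebraicClosure K) b ≠ 0 := by
      simpa [map_eq_zero_iff _ hιinj] using hb
    rw [hB, show algebraMap K (AlgebraicClosure K) (a / b)
        = algebraMap K (AlgebraicClosure K) a / algebraMap K (AlgebraicClosure K) b from
        map_div₀ _ a b, Stmt10Aux.val_div_le_one_iff B hιb]
    exact hab
  have heval : ∀ (ψ : RatFunc K) (x : K), RatFunc.eval (RingHom.id K) x ψ
      = ψ.num.eval x / ψ.denom.eval x := by
    intro ψ x
    simp [RatFunc.eval, Polynomial.eval, -Polynomial.eval₂_id]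
  obtain ⟨N₁, c₁, e₁, hc₁, H₁⟩ :=
    Stmt10Aux.poly_val B s hg hgne φ.num (RatFunc.num_ne_zero hφ)
  obtain ⟨N₂, c₂, e₂, hc₂, H₂⟩ :=
    Stmt10Aux.poly_val B s hg hgne φ.denom (φ.denom_ne_zero)
  rcases Stmt10Aux.compare B s hg hgne c₁ c₂ e₁ e₂ with ⟨N, hN⟩ | ⟨N, hN⟩
  · -- φ ∈ V_E
    left
    rw [memVE, eventually_atTop]
    refine ⟨max (max N₁ N₂) N, fun n hn => ?_⟩
    have hn₁ : n ≥ N₁ := le_trans (le_trans (le_max_left _ _) (le_max_left _ _)) hn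
    have hn₂ : n ≥ N₂ := le_trans (le_trans (le_max_right _ _) (le_max_left _ _)) hn
    have hnN : n ≥ N := le_trans (le_max_right _ _) hn
    have hden : φ.denom.eval (s n) ≠ 0 := hnonzero φ.denom N₂ c₂ e₂ hc₂ H₂ n hn₂
    refine ⟨hden, ?_⟩
    rw [heval]
    apply hquot _ _ hden
    rw [H₁ n hn₁, H₂ n hn₂]
    exact hN n hnN
  · -- φ⁻¹ ∈ V_E
    right
    have hφi : φ⁻¹ ≠ 0 := inv_ne_zero hφ
    obtain ⟨N₃, c₃, e₃, hc₃, H₃⟩ := Stmt10Aux.poly_val B s hg hgne (φ⁻¹).num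
      (RatFunc.num_ne_zero hφi)
    obtain ⟨N₄, c₄, e₄, hc₄, H₄⟩ := Stmt10Aux.poly_val B s hg hgne (φ⁻¹).denom
      ((φ⁻¹).denom_ne_zero)
    -- cross identity
    have key : (φ⁻¹).num * φ.num = (φ⁻¹).denom * φ.denom := by
      apply RatFunc.algebraMap_injective K
      rw [map_mul, map_mul]
      have hD : (algebraMap (Polynomial K) (RatFunc K)) (φ⁻¹).denom ≠ 0 :=
        RatFunc.algebraMap_ne_zero ((φ⁻¹).denom_ne_zero)
      have hG : (algebraMap (Polynomial K) (RatFunc K)) φ.denom ≠ 0 :=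
        RatFunc.algebraMap_ne_zero (φ.denom_ne_zero)
      have e1 : (algebraMap (Polynomial K) (RatFunc K)) (φ⁻¹).num
          = φ⁻¹ * (algebraMap (Polynomial K) (RatFunc K)) (φ⁻¹).denom :=
        (div_eq_iff hD).mp (RatFunc.num_div_denom φ⁻¹)
      have e2 : (algebraMap (Polynomial K) (RatFunc K)) φ.num
          = φ * (algebraMap (Polynomial K) (RatFunc K)) φ.denom :=
        (div_eq_iff hG).mp (RatFunc.num_div_denom φ)
      rw [e1, e2,
        show φ⁻¹ * (algebraMap (Polynomial K) (RatFunc K)) (φ⁻¹).denom *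
          (φ * (algebraMap (Polynomial K) (RatFunc K)) φ.denom)
          = (φ⁻¹ * φ) * ((algebraMap (Polynomial K) (RatFunc K)) (φ⁻¹).denom *
            (algebraMap (Polynomial K) (RatFunc K)) φ.denom) from by ring,
        inv_mul_cancel₀ hφ, one_mul]
    rw [memVE, eventually_atTop]
    refine ⟨max (max N₁ N₂) (max (max N₃ N₄) N), fun n hn => ?_⟩
    have hn₁ : n ≥ N₁ := le_trans (le_trans (le_max_left _ _) (le_max_left _ _)) hn
    have hn₂ : n ≥ N₂ := le_trans (le_trans (le_max_right _ _) (le_max_left _ _)) hn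
    have hn₄ : n ≥ N₄ :=
      le_trans (le_trans (le_max_right _ _) (le_trans (le_max_left _ _) (le_max_right _ _))) hn
    have hnN : n ≥ N := le_trans (le_trans (le_max_right _ _) (le_max_right _ _)) hn
    have hden : (φ⁻¹).denom.eval (s n) ≠ 0 := hnonzero (φ⁻¹).denom N₄ c₄ e₄ hc₄ H₄ n hn₄
    refine ⟨hden, ?_⟩
    rw [heval]
    apply hquot _ _ hden
    -- use the key identity evaluated at s n
    have hkey : (φ⁻¹).num.eval (s n) * φ.num.eval (s n)
        = (φ⁻¹).denom.eval (s n) * φ.denom.eval (s n) := by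
      have h3 := congrArg (Polynomial.eval (s n)) key
      simpa [Polynomial.eval_mul] using h3
    have hwkey : B.valuation (algebraMap K (AlgebraicClosure K) ((φ⁻¹).num.eval (s n)))
          * B.valuation (algebraMap K (AlgebraicClosure K) (φ.num.eval (s n)))
        = B.valuation (algebraMap K (AlgebraicClosure K) ((φ⁻¹).denom.eval (s n)))
          * B.valuation (algebraMap K (AlgebraicClosure K) (φ.denom.eval (s n))) := by
      rw [← map_mul, ← map_mul (algebraMap K (AlgebraicClosure K)), ← map_mul,
        ← map_mul (algebraMap K (AlgebraicClosure K)), hkey]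
    have hFne : B.valuation (algebraMap K (AlgebraicClosure K) (φ.num.eval (s n))) ≠ 0 := by
      rw [H₁ n hn₁]
      exact mul_ne_zero hc₁ (pow_ne_zero _ (hgne n))
    have hGF : B.valuation (algebraMap K (AlgebraicClosure K) (φ.denom.eval (s n)))
        ≤ B.valuation (algebraMap K (AlgebraicClosure K) (φ.num.eval (s n))) := by
      rw [H₁ n hn₁, H₂ n hn₂]
      exact hN n hnN
    rw [← Stmt10Aux.mul_le_mul_right_iff' hFne, hwkey]
    exact mul_le_mul_right hGF _
end

section
/- Let E = {s_n} ⊂ K be a pseudo-convergent sequence with a pseudo-limit β ∈ K, and let V_E be the associated valuation ring of K(X), with valuation v_E. Then for α ∈ K, v_E(X - α) ≤ v_E(X - β), with equality if and only if α is a pseudo-limit of E. -/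
open Filter

private lemma div_val_nonneg_iff {K Γ : Type*} [Field K] [AddCommGroup Γ] [LinearOrder Γ] [IsOrderedAddMonoid Γ]
    (v : AddValuation K (WithTop Γ)) {a b : K} (hb : b ≠ 0) :
    0 ≤ v (a / b) ↔ v b ≤ v a := by
  have hb' : v b ≠ ⊤ := v.ne_top_iff.mpr hb
  have ha : v a = v (a / b) + v b := by
    rw [← v.map_mul, div_mul_cancel₀ _ hb]
  constructor
  · intro h
    calc v b = 0 + v b := (zero_add _).symm
      _ ≤ v (a / b) + v b := add_le_add_left h _
      _ = v a := ha.symm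
  · intro h
    rw [ha] at h
    have h' : (0 : WithTop Γ) + v b ≤ v (a / b) + v b := by rw [zero_add]; exact h
    exact (WithTop.add_le_add_iff_right hb').mp h'

private lemma num_denom_aux {K : Type*} [Field K] {a b : K} (h : b ≠ a) :
    RatFunc.num ((RatFunc.X - RatFunc.C a) / (RatFunc.X - RatFunc.C b))
      = Polynomial.X - Polynomial.C a ∧
    RatFunc.denom ((RatFunc.X - RatFunc.C a) / (RatFunc.X - RatFunc.C b))
      = Polynomial.X - Polynomial.C b := by
  classical
  have hco : IsCoprime (Polynomial.X - Polynomial.C a) (Polynomial.X - Polynomial.C b) :=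
    Polynomial.isCoprime_X_sub_C_of_isUnit_sub
      (sub_ne_zero_of_ne (fun e => h e.symm)).isUnit
  have hg : gcd (Polynomial.X - Polynomial.C a) (Polynomial.X - Polynomial.C b) = 1 := by
    rw [← normalize_gcd]
    exact normalize_eq_one.mpr (hco.isUnit_of_dvd' (gcd_dvd_left _ _) (gcd_dvd_right _ _))
  have hXa : (RatFunc.X - RatFunc.C a : RatFunc K)
      = algebraMap (Polynomial K) (RatFunc K) (Polynomial.X - Polynomial.C a) := by
    rw [map_sub, RatFunc.algebraMap_X, RatFunc.algebraMap_C]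
  have hXb : (RatFunc.X - RatFunc.C b : RatFunc K)
      = algebraMap (Polynomial K) (RatFunc K) (Polynomial.X - Polynomial.C b) := by
    rw [map_sub, RatFunc.algebraMap_X, RatFunc.algebraMap_C]
  have hb0 : (Polynomial.X - Polynomial.C b : Polynomial K) ≠ 0 := Polynomial.X_sub_C_ne_zero b
  constructor
  · rw [hXa, hXb, RatFunc.num_div, hg]
    simp [Polynomial.Monic.leadingCoeff (Polynomial.monic_X_sub_C b)]
  · rw [hXa, hXb, RatFunc.denom_div _ hb0, hg]
    simp [Polynomial.Monic.leadingCoeff (Polynomial.monic_X_sub_C b)]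

private lemma memVE_div {K Γ : Type*} [Field K] [AddCommGroup Γ] [LinearOrder Γ] [IsOrderedAddMonoid Γ]
    (v : AddValuation K (WithTop Γ)) (s : ℕ → K) {a b : K}
    (h : ∀ᶠ n in atTop, s n ≠ b ∧ v (s n - b) ≤ v (s n - a)) :
    memVE v s ((RatFunc.X - RatFunc.C a) / (RatFunc.X - RatFunc.C b)) := by
  by_cases hab : b = a
  · subst hab
    have hne : (RatFunc.X - RatFunc.C b : RatFunc K) ≠ 0 := by
      have heq : (RatFunc.X - RatFunc.C b : RatFunc K)
          = algebraMap (Polynomial K) (RatFunc K) (Polynomial.X - Polynomial.C b) := by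
        rw [map_sub, RatFunc.algebraMap_X, RatFunc.algebraMap_C]
      rw [heq]
      exact RatFunc.algebraMap_ne_zero (Polynomial.X_sub_C_ne_zero b)
    have h1 : ((RatFunc.X - RatFunc.C b) / (RatFunc.X - RatFunc.C b) : RatFunc K) = 1 :=
      div_self hne
    rw [memVE, h1]
    filter_upwards with n
    simp [RatFunc.eval]
  · obtain ⟨hnum, hden⟩ := num_denom_aux (K := K) (a := a) (b := b) hab
    filter_upwards [h] with n hn
    obtain ⟨h1, h2⟩ := hn
    have hd : (s n - b) ≠ 0 := sub_ne_zero_of_ne h1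
    constructor
    · rw [hden]
      simpa using hd
    · rw [RatFunc.eval, hnum, hden]
      have e1 : Polynomial.eval₂ (RingHom.id K) (s n) (Polynomial.X - Polynomial.C a)
          = s n - a := by simp
      have e2 : Polynomial.eval₂ (RingHom.id K) (s n) (Polynomial.X - Polynomial.C b)
          = s n - b := by simp
      rw [e1, e2, div_val_nonneg_iff v hd]
      exact h2

/-- If β ∈ K is a pseudo-limit of E, then v_E(X - α) ≤ v_E(X - β) for all α ∈ K
(i.e. (X-β)/(X-α) ∈ V_E), with equality (i.e. (X-α)/(X-β) ∈ V_E as well)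
if and only if α is a pseudo-limit of E. -/
theorem stmt11 {K Γ : Type*} [Field K] [AddCommGroup Γ] [LinearOrder Γ] [IsOrderedAddMonoid Γ]
    (v : AddValuation K (WithTop Γ)) (s : ℕ → K)
    (hE : ∀ n, v (s (n + 1) - s n) < v (s (n + 2) - s (n + 1)))
    (β : K) (hβ : ∀ n, v (β - s n) < v (β - s (n + 1))) (α : K) :
    memVE v s ((RatFunc.X - RatFunc.C β) / (RatFunc.X - RatFunc.C α)) ∧
    (memVE v s ((RatFunc.X - RatFunc.C α) / (RatFunc.X - RatFunc.C β)) ↔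
      ∀ n, v (α - s n) < v (α - s (n + 1))) := by
  have hmono : StrictMono (fun n => v (β - s n)) := strictMono_nat_of_lt_succ hβ
  have hne_top : ∀ n, v (β - s n) ≠ ⊤ := fun n => ne_top_of_lt (hβ n)
  have hsβ : ∀ n, s n ≠ β := by
    intro n hn
    exact hne_top n (by rw [hn, sub_self, AddValuation.map_zero])
  by_cases hcase : ∀ n, v (β - s n) < v (α - β)
  -- Case B : α is a pseudo-limit, v (α - s n) = v (β - s n) for all n
  · have heq : ∀ n, v (α - s n) = v (β - s n) := by
      intro n
      have : α - s n = (α - β) + (β - s n) := by ring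
      rw [this, AddValuation.map_add_eq_of_lt_right v (hcase n)]
    have hsα : ∀ n, s n ≠ α := by
      intro n hn
      apply hne_top n
      rw [← heq n, hn, sub_self, AddValuation.map_zero]
    constructor
    · apply memVE_div
      filter_upwards with n
      refine ⟨hsα n, le_of_eq ?_⟩
      rw [v.map_sub_swap (s n) α, v.map_sub_swap (s n) β, heq n]
    · constructor
      · intro _ n
        rw [heq n, heq (n + 1)]
        exact hβ n
      · intro _
        apply memVE_div
        filter_upwards with n
        refine ⟨hsβ n, le_of_eq ?_⟩
        rw [v.map_sub_swap (s n) α, v.map_sub_swap (s n) β, heq n]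
  -- Case C : α is not a pseudo-limit
  · push_neg at hcase
    obtain ⟨N, hN⟩ := hcase
    have hαβ : α ≠ β := by
      intro hn
      apply hne_top N
      apply top_le_iff.mp
      calc (⊤ : WithTop Γ) = v (α - β) := by rw [hn, sub_self, AddValuation.map_zero]
        _ ≤ v (β - s N) := hN
    have hlt : ∀ n, N < n → v (α - β) < v (β - s n) := fun n hn =>
      lt_of_le_of_lt hN (hmono hn)
    have heq : ∀ n, N < n → v (α - s n) = v (α - β) := by
      intro n hn
      have e : α - s n = (α - β) + (β - s n) := by ring
      rw [e, AddValuation.map_add_eq_of_lt_left v (hlt n hn)]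
    have hαβtop : v (α - β) ≠ ⊤ := v.ne_top_iff.mpr (sub_ne_zero_of_ne hαβ)
    have hsα : ∀ n, N < n → s n ≠ α := by
      intro n hn h
      apply hαβtop
      rw [← heq n hn, h, sub_self, AddValuation.map_zero]
    constructor
    · apply memVE_div
      filter_upwards [eventually_gt_atTop N] with n hn
      refine ⟨hsα n hn, ?_⟩
      rw [v.map_sub_swap (s n) α, v.map_sub_swap (s n) β, heq n hn]
      exact le_of_lt (hlt n hn)
    · constructor
      · -- memVE of (X - α)/(X - β) fails
        intro hmem
        exfalso
        obtain ⟨hnum, hden⟩ := num_denom_aux (K := K) (a := α) (b := β) (Ne.symm hαβ)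
        obtain ⟨n, hn1, hn2⟩ := (hmem.and (eventually_gt_atTop N)).exists
        obtain ⟨_, h0⟩ := hn1
        rw [RatFunc.eval, hnum, hden] at h0
        have e1 : Polynomial.eval₂ (RingHom.id K) (s n) (Polynomial.X - Polynomial.C α)
            = s n - α := by simp
        have e2 : Polynomial.eval₂ (RingHom.id K) (s n) (Polynomial.X - Polynomial.C β)
            = s n - β := by simp
        rw [e1, e2, div_val_nonneg_iff v (sub_ne_zero_of_ne (hsβ n))] at h0
        rw [v.map_sub_swap (s n) α, v.map_sub_swap (s n) β, heq n hn2] at h0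
        exact absurd h0 (not_le_of_gt (hlt n hn2))
      · -- α is not a pseudo-limit
        intro hpl
        exfalso
        have h1 := heq (N + 1) (Nat.lt_succ_self N)
        have h2 := heq (N + 2) (by omega)
        have := hpl (N + 1)
        rw [h1, h2] at this
        exact lt_irrefl _ this
end

section
/- Let E = {s_n} ⊂ K be a pseudo-convergent sequence with pseudo-limit β ∈ K, and let v_E be the valuation associated to V_E = {φ ∈ K(X) : φ(s_n) ∈ V for almost all n}. Let Δ_E = v_E(X - β). Then Δ_E is not torsion modulo the value group Γ_v of v: if k ∈ ℕ satisfies k·Δ_E ∈ Γ_v, then k = 0. -/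
open Filter

private lemma nsmul_coe_withTop {Γ : Type*} [AddCommGroup Γ] [LinearOrder Γ] [IsOrderedAddMonoid Γ]
    (k : ℕ) (γ : Γ) : (k • (γ : WithTop Γ)) = ((k • γ : Γ) : WithTop Γ) := by
  induction k with
  | zero => simp
  | succ n ih => rw [succ_nsmul, succ_nsmul, ih, WithTop.coe_add]

/-- Δ_E = v_E(X - β) is not torsion modulo Γ_v: if k·Δ_E = v(a) for some a ∈ K*
(i.e. (X - β)^k/a is a unit of V_E), then k = 0. -/
theorem stmt12 {K Γ : Type*} [Field K] [AddCommGroup Γ] [LinearOrder Γ] [IsOrderedAddMonoid Γ]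
    (v : AddValuation K (WithTop Γ)) (s : ℕ → K)
    (hE : ∀ n, v (s (n + 1) - s n) < v (s (n + 2) - s (n + 1)))
    (β : K) (hβ : ∀ n, v (β - s n) < v (β - s (n + 1))) :
    ∀ k : ℕ, ∀ a : K, a ≠ 0 →
      memVE v s ((RatFunc.X - RatFunc.C β) ^ k / RatFunc.C a) →
      memVE v s (RatFunc.C a / (RatFunc.X - RatFunc.C β) ^ k) →
      k = 0 := by
  intro k a ha h1 h2
  by_contra hk
  obtain ⟨N, hN⟩ := eventually_atTop.mp (h1.and h2)
  -- basic facts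
  have hxne : ∀ n, β - s n ≠ 0 := by
    intro n h
    have := hβ n
    rw [h, v.map_zero] at this
    exact not_top_lt this
  set φ1 : RatFunc K := (RatFunc.X - RatFunc.C β) ^ k / RatFunc.C a with hφ1def
  set φ2 : RatFunc K := RatFunc.C a / (RatFunc.X - RatFunc.C β) ^ k with hφ2def
  have hXβ : (RatFunc.X - RatFunc.C β : RatFunc K) ≠ 0 := by
    rw [← RatFunc.algebraMap_X, ← RatFunc.algebraMap_C, ← map_sub]
    exact RatFunc.algebraMap_ne_zero (Polynomial.X_sub_C_ne_zero β)
  have hCa : (RatFunc.C a : RatFunc K) ≠ 0 := by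
    simpa using ha
  have hφ1 : φ1 = algebraMap (Polynomial K) (RatFunc K)
      (Polynomial.C a⁻¹ * (Polynomial.X - Polynomial.C β) ^ k) := by
    rw [hφ1def, map_mul, map_pow, map_sub, RatFunc.algebraMap_X, RatFunc.algebraMap_C,
      RatFunc.algebraMap_C, map_inv₀ (RatFunc.C : K →+* RatFunc K), div_eq_mul_inv, mul_comm]
  have hmul : φ1 * φ2 = 1 := by
    rw [hφ1def, hφ2def, div_mul_div_comm, mul_comm (RatFunc.C a), div_self]
    exact mul_ne_zero (pow_ne_zero _ hXβ) hCa
  -- main computation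
  have main : ∀ n, N ≤ n → (k • v (β - s n) : WithTop Γ) = v a := by
    intro n hn
    obtain ⟨⟨hd1, hv1⟩, hd2, hv2⟩ := hN n hn
    set e1 := RatFunc.eval (RingHom.id K) (s n) φ1 with he1def
    set e2 := RatFunc.eval (RingHom.id K) (s n) φ2 with he2def
    have he1 : e1 = a⁻¹ * (s n - β) ^ k := by
      rw [he1def, hφ1, RatFunc.eval_algebraMap]
      simp [Polynomial.eval₂_eq_eval_map, mul_comm]
    have hd1' : Polynomial.eval₂ (RingHom.id K) (s n) (RatFunc.denom φ1) ≠ 0 := hd1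
    have hd2' : Polynomial.eval₂ (RingHom.id K) (s n) (RatFunc.denom φ2) ≠ 0 := hd2
    have he12 : e1 * e2 = 1 := by
      rw [he1def, he2def, ← RatFunc.eval_mul (f := RingHom.id K) (a := s n) hd1' hd2', hmul, RatFunc.eval_one]
    have hsum : v e1 + v e2 = 0 := by
      rw [← v.map_mul, he12, v.map_one]
    have hve1 : v e1 = 0 := by
      refine le_antisymm ?_ hv1
      calc v e1 ≤ v e1 + v e2 := le_add_of_nonneg_right hv2
        _ = 0 := hsum
    have hpow : v ((s n - β) ^ k) = v a := by
      have hae1 : a * e1 = (s n - β) ^ k := by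
        rw [he1]; field_simp
      calc v ((s n - β) ^ k) = v (a * e1) := by rw [hae1]
        _ = v a + v e1 := v.map_mul _ _
        _ = v a := by rw [hve1, add_zero]
    have : v (s n - β) = v (β - s n) := by
      rw [show s n - β = -(β - s n) by ring, v.map_neg]
    rw [← this, ← v.map_pow]
    exact hpow
  -- contradiction from strict monotonicity
  obtain ⟨γ1, hγ1⟩ := WithTop.ne_top_iff_exists.mp (hβ N).ne_top
  obtain ⟨γ2, hγ2⟩ := WithTop.ne_top_iff_exists.mp (hβ (N + 1)).ne_top
  have hlt : γ1 < γ2 := by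
    have := hβ N
    rw [← hγ1, ← hγ2] at this
    exact WithTop.coe_lt_coe.mp this
  have h1' := main N le_rfl
  have h2' := main (N + 1) (Nat.le_succ N)
  rw [← hγ1, nsmul_coe_withTop] at h1'
  rw [← hγ2, nsmul_coe_withTop] at h2'
  have heq : k • γ1 = k • γ2 := WithTop.coe_injective (h1'.trans h2'.symm)
  have hpos : 0 < k • (γ2 - γ1) := nsmul_pos (sub_pos.mpr hlt) hk
  rw [smul_sub, ← heq, sub_self] at hpos
  exact lt_irrefl _ hpos
end

section
/- Let (K, v) be a rank one valued field and let E = {s_n}, F = {t_n} be two equivalent pseudo-convergent sequences in K (same breadth δ, and for every k there exist i_0, j_0 such that v(s_i − t_j) > v(t_{k+1} − t_k) for all i ≥ i_0, j ≥ j_0). If E is of algebraic type and β ∈ \overline{K} is a pseudo-limit of E with respect to an extension u of v, then β is also a pseudo-limit of F; in particular F is of algebraic type and L_E^u = L_F^u. -/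
open Filter Polynomial

section Helpers

variable {L : Type*} [Field L] (u : AddValuation L (WithTop ℝ))

private lemma lt_isup_aux {f : ℕ → WithTop ℝ} {a : WithTop ℝ} (h : a < ⨆ n, f n) :
    ∃ n, a < f n := by
  by_contra hc
  push_neg at hc
  exact absurd (ciSup_le hc) (not_le.mpr h)

private lemma limval_aux {S : ℕ → L} {x : L}
    (hx : ∀ n, u (x - S n) < u (x - S (n + 1))) (n : ℕ) :
    u (S (n + 1) - S n) = u (x - S n) := by
  have e : S (n + 1) - S n = (x - S n) - (x - S (n + 1)) := by ring
  rw [e, u.map_sub_eq_of_lt_left (hx n)]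

private lemma tele_aux {S : ℕ → L}
    (hS : ∀ n, u (S (n + 1) - S n) < u (S (n + 2) - S (n + 1)))
    {n m : ℕ} (h : n < m) : u (S m - S n) = u (S (n + 1) - S n) := by
  have hmono : StrictMono (fun k => u (S (k + 1) - S k)) := strictMono_nat_of_lt_succ hS
  induction m with
  | zero => omega
  | succ m ih =>
    rcases Nat.lt_succ_iff_lt_or_eq.mp h with h' | h'
    · have e : S (m + 1) - S n = (S (m + 1) - S m) + (S m - S n) := by ring
      have hlt : u (S m - S n) < u (S (m + 1) - S m) := by
        rw [ih h']; exact hmono h'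
      rw [e, u.map_add_eq_of_lt_right hlt, ih h']
    · subst h'; rfl

private lemma key_aux {S T : ℕ → L}
    (hS : ∀ n, u (S (n + 1) - S n) < u (S (n + 2) - S (n + 1)))
    (hT : ∀ n, u (T (n + 1) - T n) < u (T (n + 2) - T (n + 1)))
    (hbr : (⨆ n, u (S (n + 1) - S n)) = ⨆ n, u (T (n + 1) - T n))
    (heq : ∀ k : ℕ, ∃ i0 j0 : ℕ, ∀ i ≥ i0, ∀ j ≥ j0,
      u (T (k + 1) - T k) < u (S i - T j))
    {x : L} (hx : ∀ n, u (x - S n) < u (x - S (n + 1))) (k : ℕ) :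
    u (x - T k) = u (T (k + 1) - T k) := by
  have hmS : StrictMono (fun n => u (S (n + 1) - S n)) := strictMono_nat_of_lt_succ hS
  have h1 : u (T (k + 1) - T k) < ⨆ n, u (S (n + 1) - S n) := by
    rw [hbr]
    exact lt_of_lt_of_le (hT k) (le_ciSup (f := fun n => u (T (n + 1) - T n)) (OrderTop.bddAbove _) (k + 1))
  obtain ⟨i1, hi1⟩ := lt_isup_aux h1
  obtain ⟨i0, j0, hij⟩ := heq k
  set i := max i0 i1 with hi
  set j := max j0 (k + 1) with hj
  have h2 : u (T (k + 1) - T k) < u (x - S i) := by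
    rw [← limval_aux u hx i]
    exact hi1.trans_le (hmS.monotone (le_max_right i0 i1))
  have h3 : u (T (k + 1) - T k) < u (S i - T j) :=
    hij i (le_max_left _ _) j (le_max_left _ _)
  have h4 : u (T j - T k) = u (T (k + 1) - T k) :=
    tele_aux u hT (lt_of_lt_of_le (Nat.lt_succ_self k) (le_max_right j0 (k + 1)))
  have h5 : u (T j - T k) < u ((x - S i) + (S i - T j)) := by
    rw [h4]; exact u.map_lt_add h2 h3
  have e : x - T k = (T j - T k) + ((x - S i) + (S i - T j)) := by ring
  rw [e, u.map_add_eq_of_lt_left h5, h4]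

private lemma key2_aux {S T : ℕ → L}
    (hS : ∀ n, u (S (n + 1) - S n) < u (S (n + 2) - S (n + 1)))
    (hT : ∀ n, u (T (n + 1) - T n) < u (T (n + 2) - T (n + 1)))
    (hbr : (⨆ n, u (S (n + 1) - S n)) = ⨆ n, u (T (n + 1) - T n))
    (heq : ∀ k : ℕ, ∃ i0 j0 : ℕ, ∀ i ≥ i0, ∀ j ≥ j0,
      u (T (k + 1) - T k) < u (S i - T j))
    {x : L} (hx : ∀ n, u (x - T n) < u (x - T (n + 1))) (i : ℕ) :
    u (x - S i) = u (S (i + 1) - S i) := by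
  have hmT : StrictMono (fun n => u (T (n + 1) - T n)) := strictMono_nat_of_lt_succ hT
  have h1 : u (S (i + 1) - S i) < ⨆ n, u (T (n + 1) - T n) := by
    rw [← hbr]
    exact lt_of_lt_of_le (hS i) (le_ciSup (f := fun n => u (S (n + 1) - S n)) (OrderTop.bddAbove _) (i + 1))
  obtain ⟨k, hk⟩ := lt_isup_aux h1
  obtain ⟨i0, j0, hij⟩ := heq k
  set i' := max i0 (i + 1) with hi'
  set j := max j0 k with hj
  have h2 : u (S (i + 1) - S i) < u (x - T j) := by
    rw [← limval_aux u hx j]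
    exact hk.trans_le (hmT.monotone (le_max_right j0 k))
  have h3 : u (S (i + 1) - S i) < u (T j - S i') := by
    rw [u.map_sub_swap (T j) (S i')]
    exact hk.trans (hij i' (le_max_left _ _) j (le_max_left _ _))
  have h4 : u (S i' - S i) = u (S (i + 1) - S i) :=
    tele_aux u hS (lt_of_lt_of_le (Nat.lt_succ_self i) (le_max_right i0 (i + 1)))
  have h5 : u (S i' - S i) < u ((x - T j) + (T j - S i')) := by
    rw [h4]; exact u.map_lt_add h2 h3
  have e : x - S i = (S i' - S i) + ((x - T j) + (T j - S i')) := by ring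
  rw [e, u.map_add_eq_of_lt_left h5, h4]

private lemma usum_prod (M : Multiset L) : u M.prod = (M.map u).sum := by
  induction M using Multiset.induction with
  | empty => simpa using u.map_one
  | cons a M ih => simp [u.map_mul, ih]

private lemma msum_ne_top {α : Type*} (g : α → WithTop ℝ) (M : Multiset α)
    (htop : ∀ r ∈ M, g r ≠ ⊤) : (M.map g).sum ≠ ⊤ := by
  induction M using Multiset.induction with
  | empty => simp
  | cons a M ih =>
    rw [Multiset.map_cons, Multiset.sum_cons]
    exact WithTop.add_ne_top.mpr ⟨htop a (Multiset.mem_cons_self _ _),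
      ih fun r hr => htop r (Multiset.mem_cons_of_mem hr)⟩

private lemma msum_lt {α : Type*} (f g : α → WithTop ℝ) (M : Multiset α)
    (hle : ∀ r ∈ M, f r ≤ g r) (htop : ∀ r ∈ M, g r ≠ ⊤)
    {r0 : α} (hr0 : r0 ∈ M) (hst : f r0 < g r0) :
    (M.map f).sum < (M.map g).sum := by
  obtain ⟨M', rfl⟩ := Multiset.exists_cons_of_mem hr0
  rw [Multiset.map_cons, Multiset.map_cons, Multiset.sum_cons, Multiset.sum_cons]
  have hB : (M'.map g).sum ≠ ⊤ :=
    msum_ne_top g M' fun r hr => htop r (Multiset.mem_cons_of_mem hr)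
  have hB2 : (M'.map f).sum ≤ (M'.map g).sum :=
    Multiset.sum_map_le_sum_map _ _ fun r hr => hle r (Multiset.mem_cons_of_mem hr)
  have hA : (M'.map f).sum ≠ ⊤ := ne_top_of_le_ne_top hB hB2
  exact WithTop.add_lt_add_of_lt_of_le hA hst hB2

end Helpers

/-- If E = {s_n} and F = {t_n} are equivalent pseudo-convergent sequences
(same breadth and v(s_i - t_j) > v(t_{k+1} - t_k) for all large i, j), E of
algebraic type, and β in the algebraic closure is a pseudo-limit of E with
respect to an extension u of v, then β is also a pseudo-limit of F; in
particular F is of algebraic type and L_E^u = L_F^u. -/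
theorem stmt16 {K L : Type*} [Field K] [Field L] [Algebra K L]
    [IsAlgClosed L] [Algebra.IsAlgebraic K L]
    (v : AddValuation K (WithTop ℝ)) (u : AddValuation L (WithTop ℝ))
    (hu : ∀ x : K, u (algebraMap K L x) = v x)
    (s t : ℕ → K)
    (hE : ∀ n, v (s (n + 1) - s n) < v (s (n + 2) - s (n + 1)))
    (hF : ∀ n, v (t (n + 1) - t n) < v (t (n + 2) - t (n + 1)))
    (hbreadth : (⨆ n, v (s (n + 1) - s n)) = ⨆ n, v (t (n + 1) - t n))
    (hequiv : ∀ k : ℕ, ∃ i0 j0 : ℕ, ∀ i ≥ i0, ∀ j ≥ j0,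
      v (t (k + 1) - t k) < v (s i - t j))
    (hEalg : ∃ f : Polynomial K, ∃ N, ∀ n ≥ N, v (f.eval (s n)) < v (f.eval (s (n + 1))))
    (β : L)
    (hβ : ∀ n, u (β - algebraMap K L (s n)) < u (β - algebraMap K L (s (n + 1)))) :
    (∀ n, u (β - algebraMap K L (t n)) < u (β - algebraMap K L (t (n + 1)))) ∧
    (∃ g : Polynomial K, ∃ N, ∀ n ≥ N, v (g.eval (t n)) < v (g.eval (t (n + 1)))) ∧
    {x : L | ∀ n, u (x - algebraMap K L (s n)) < u (x - algebraMap K L (s (n + 1)))} =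
      {x : L | ∀ n, u (x - algebraMap K L (t n)) < u (x - algebraMap K L (t (n + 1)))} := by
  classical
  set φ := algebraMap K L with hφ
  set S : ℕ → L := fun n => φ (s n) with hSdef
  set T : ℕ → L := fun n => φ (t n) with hTdef
  have hv : ∀ a b : K, u (φ a - φ b) = v (a - b) := fun a b => by
    rw [← map_sub]; exact hu _
  have hE' : ∀ n, u (S (n + 1) - S n) < u (S (n + 2) - S (n + 1)) := fun n => by
    simpa only [hSdef, hv] using hE n
  have hF' : ∀ n, u (T (n + 1) - T n) < u (T (n + 2) - T (n + 1)) := fun n => by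
    simpa only [hTdef, hv] using hF n
  have hbr' : (⨆ n, u (S (n + 1) - S n)) = ⨆ n, u (T (n + 1) - T n) := by
    simp only [hSdef, hTdef, hv]; exact hbreadth
  have heq' : ∀ k : ℕ, ∃ i0 j0 : ℕ, ∀ i ≥ i0, ∀ j ≥ j0,
      u (T (k + 1) - T k) < u (S i - T j) := fun k => by
    obtain ⟨i0, j0, h⟩ := hequiv k
    exact ⟨i0, j0, fun i hi j hj => by
      simpa only [hSdef, hTdef, hv] using h i hi j hj⟩
  -- first conjunct
  have c1 : ∀ n, u (β - T n) < u (β - T (n + 1)) := by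
    have h := key_aux u hE' hF' hbr' heq' hβ
    intro n
    rw [h n, h (n + 1)]
    exact hF' n
  refine ⟨c1, ?_, ?_⟩
  · -- second conjunct: F is of algebraic type, witnessed by minpoly of β
    have hβint : IsIntegral K β := (Algebra.IsAlgebraic.isAlgebraic β).isIntegral
    set g : Polynomial K := minpoly K β with hgdef
    set G : Polynomial L := g.map φ with hGdef
    have hGmonic : G.Monic := (minpoly.monic hβint).map φ
    have hG0 : G ≠ 0 := hGmonic.ne_zero
    have hGsplits : G.Splits :=
      IsAlgClosed.splits G
    have hGeq : G = (G.roots.map fun a => X - C a).prod :=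
      hGsplits.eq_prod_roots_of_monic hGmonic
    have hβroot : β ∈ G.roots := by
      rw [Polynomial.mem_roots']
      refine ⟨hG0, ?_⟩
      show G.eval β = 0
      rw [hGdef, Polynomial.eval_map, ← Polynomial.aeval_def, minpoly.aeval]
    have heval : ∀ x : L, G.eval x = (G.roots.map fun r => x - r).prod := fun x => by
      conv_lhs => rw [hGeq]
      rw [Polynomial.eval_multiset_prod, Multiset.map_map]
      simp [Function.comp]
    have hval : ∀ y : K, v (g.eval y) = (G.roots.map fun r => u (φ y - r)).sum := fun y => by
      have h1 : φ (g.eval y) = G.eval (φ y) := by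
        rw [hGdef, Polynomial.eval_map, Polynomial.eval₂_hom]
      rw [← hu, h1, heval, usum_prod, Multiset.map_map]
      rfl
    set w : ℕ → WithTop ℝ := fun n => u (β - T n) with hwdef
    have hwmono : StrictMono w := strictMono_nat_of_lt_succ c1
    have hwtop : ∀ n, w n ≠ ⊤ := fun n =>
      ((hwmono (Nat.lt_succ_self n)).trans_le le_top).ne
    set P : L → Prop := fun r => ∃ m, u (β - r) ≤ w m with hPdef
    set Nf : L → ℕ := fun r => if h : P r then h.choose + 1 else 0 with hNfdef
    set N : ℕ := (G.roots.map Nf).sum with hNdef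
    refine ⟨g, N, fun n hn => ?_⟩
    have hterm : ∀ m ≥ N, ∀ r ∈ G.roots,
        u (T m - r) = if P r then u (β - r) else w m := by
      intro m hm r hr
      have hNfr : Nf r ≤ m :=
        le_trans (Multiset.le_sum_of_mem (Multiset.mem_map_of_mem Nf hr)) hm
      by_cases h : P r
      · have hm' : h.choose < m := by
          have : Nf r = h.choose + 1 := by rw [hNfdef]; simp [h]
          omega
        have hlt : u (β - r) < w m := h.choose_spec.trans_lt (hwmono hm')
        rw [show T m - r = (β - r) - (β - T m) by ring,
          u.map_sub_eq_of_lt_left hlt, if_pos h]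
      · have hlt : w m < u (β - r) := lt_of_not_ge fun hc => h ⟨m, hc⟩
        rw [show T m - r = (β - r) - (β - T m) by ring,
          u.map_sub_eq_of_lt_right hlt, if_neg h]
    have hmapn : (G.roots.map fun r => u (φ (t n) - r)) =
        G.roots.map fun r => if P r then u (β - r) else w n :=
      Multiset.map_congr rfl fun r hr => hterm n hn r hr
    have hmapn1 : (G.roots.map fun r => u (φ (t (n + 1)) - r)) =
        G.roots.map fun r => if P r then u (β - r) else w (n + 1) :=
      Multiset.map_congr rfl fun r hr => hterm (n + 1) (le_trans hn (Nat.le_succ n)) r hr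
    rw [hval, hval, hmapn, hmapn1]
    have hnotPβ : ¬ P β := by
      rintro ⟨m, hm⟩
      exact hwtop m (top_le_iff.mp (by simpa using hm))
    refine msum_lt _ _ _ (fun r hr => ?_) (fun r hr => ?_) hβroot ?_
    · by_cases h : P r
      · simp [h]
      · simp only [if_neg h]
        exact (hwmono (Nat.lt_succ_self n)).le
    · by_cases h : P r
      · simp only [if_pos h]
        exact ne_top_of_le_ne_top (hwtop _) h.choose_spec
      · simp only [if_neg h]
        exact hwtop _
    · simp only [if_neg hnotPβ]
      exact hwmono (Nat.lt_succ_self n)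
  · -- third conjunct
    ext x
    simp only [Set.mem_setOf_eq]
    constructor
    · intro hx n
      have h := key_aux u hE' hF' hbr' heq' hx
      rw [h n, h (n + 1)]
      exact hF' n
    · intro hx n
      have h := key2_aux u hE' hF' hbr' heq' hx
      rw [h n, h (n + 1)]
      exact hE' n
end

section
/- Let (K, v) be a rank one valued field, and let E, F ⊂ K be pseudo-convergent sequences of transcendental type with the same Ostrowski valuation ring W_E = W_F. Then w_E = w_F, i.e., lim v(φ(s_n)) = lim v(φ(t_n)) for every nonzero φ ∈ K(X). -/
open Filter

section Aux

variable {K : Type*} [Field K]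

private lemma eval₂_id' (p : Polynomial K) (x : K) :
    p.eval₂ (RingHom.id K) x = p.eval x := rfl

/-- For a pseudo-convergent sequence, `v (s m - s n) = v (s (n+1) - s n)` for `n < m`. -/
private lemma pc_val_sub (v : AddValuation K (WithTop ℝ)) {s : ℕ → K}
    (hE : ∀ n, v (s (n + 1) - s n) < v (s (n + 2) - s (n + 1))) :
    ∀ n m : ℕ, n < m → v (s m - s n) = v (s (n + 1) - s n) := by
  have hmono : StrictMono (fun n => v (s (n + 1) - s n)) := strictMono_nat_of_lt_succ hE
  intro n m h
  induction m with
  | zero => omega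
  | succ m ih =>
    rcases Nat.lt_succ_iff_lt_or_eq.mp h with h' | h'
    · have hvm : v (s m - s n) = v (s (n + 1) - s n) := ih h'
      have hlt : v (s m - s n) < v (s (m + 1) - s m) := by
        rw [hvm]; exact hmono h'
      have hsum : s (m + 1) - s n = (s (m + 1) - s m) + (s m - s n) := by ring
      rw [hsum, AddValuation.map_add_eq_of_lt_right v hlt]
      exact hvm
    · subst h'; rfl

/-- Terms of a pseudo-convergent sequence are pairwise distinct. -/
private lemma pc_inj (v : AddValuation K (WithTop ℝ)) {s : ℕ → K}
    (hE : ∀ n, v (s (n + 1) - s n) < v (s (n + 2) - s (n + 1))) :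
    Function.Injective s := by
  have key : ∀ n m : ℕ, n < m → s m ≠ s n := by
    intro n m h heq
    have h1 : v (s m - s n) = v (s (n + 1) - s n) := pc_val_sub v hE n m h
    have h2 : v (s (n + 1) - s n) < ⊤ := lt_of_lt_of_le (hE n) le_top
    rw [heq, sub_self, AddValuation.map_zero] at h1
    exact absurd h1.symm (ne_of_lt h2)
  intro a b hab
  rcases lt_trichotomy a b with h | h | h
  · exact absurd hab.symm (key a b h)
  · exact h
  · exact absurd hab (key b a h)

/-- Eventually a nonzero polynomial does not vanish along a pseudo-convergent sequence. -/
private lemma pc_ev_ne_zero (v : AddValuation K (WithTop ℝ)) {s : ℕ → K}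
    (hE : ∀ n, v (s (n + 1) - s n) < v (s (n + 2) - s (n + 1)))
    {p : Polynomial K} (hp : p ≠ 0) :
    ∀ᶠ n in atTop, p.eval (s n) ≠ 0 := by
  have hfin : {n : ℕ | p.eval (s n) = 0}.Finite := by
    have : {n : ℕ | p.eval (s n) = 0} = s ⁻¹' {x | p.IsRoot x} := rfl
    rw [this]
    exact Set.Finite.preimage (Set.injOn_of_injective (pc_inj v hE))
      (Polynomial.finite_setOf_isRoot hp)
  rw [← Nat.cofinite_eq_atTop]
  exact hfin.eventually_cofinite_notMem

/-- The limit value of `v (φ (s n))` exists and equals `v (A / B)` for nonzero `A B : K`. -/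
private lemma pc_ratfunc_val (v : AddValuation K (WithTop ℝ)) {s : ℕ → K}
    (hE : ∀ n, v (s (n + 1) - s n) < v (s (n + 2) - s (n + 1)))
    (hEtr : ∀ f : Polynomial K, ∃ c : WithTop ℝ, ∀ᶠ n in atTop, v (f.eval (s n)) = c)
    {φ : RatFunc K} (hφ : φ ≠ 0) :
    ∃ A B : K, A ≠ 0 ∧ B ≠ 0 ∧
      ∀ᶠ n in atTop, φ.denom.eval (s n) ≠ 0 ∧
        v (RatFunc.eval (RingHom.id K) (s n) φ) = v (A / B) := by
  obtain ⟨cp, hcp⟩ := hEtr φ.num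
  obtain ⟨cq, hcq⟩ := hEtr φ.denom
  have h1 : ∀ᶠ n in atTop, φ.num.eval (s n) ≠ 0 := pc_ev_ne_zero v hE (RatFunc.num_ne_zero hφ)
  have h2 : ∀ᶠ n in atTop, φ.denom.eval (s n) ≠ 0 := pc_ev_ne_zero v hE φ.denom_ne_zero
  obtain ⟨N, hN1, hN2, hN3, hN4⟩ := (hcp.and (hcq.and (h1.and h2))).exists
  refine ⟨φ.num.eval (s N), φ.denom.eval (s N), hN3, hN4, ?_⟩
  filter_upwards [hcp, hcq, h1, h2] with n e1 e2 _ e4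
  refine ⟨e4, ?_⟩
  have heval : RatFunc.eval (RingHom.id K) (s n) φ
      = φ.num.eval (s n) / φ.denom.eval (s n) := by
    rw [RatFunc.eval, eval₂_id', eval₂_id']
  rw [heval, AddValuation.map_div, AddValuation.map_div, e1, e2, hN1, hN2]

/-- One inequality between the two limit values, via the hypothesis on Ostrowski rings. -/
private lemma pc_le (v : AddValuation K (WithTop ℝ)) {s t : ℕ → K} {φ : RatFunc K}
    {A B A' B' : K} (hA : A ≠ 0) (hB : B ≠ 0) (hA' : A' ≠ 0) (hB' : B' ≠ 0)
    (hsE : ∀ᶠ n in atTop, φ.denom.eval (s n) ≠ 0 ∧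
        v (RatFunc.eval (RingHom.id K) (s n) φ) = v (A / B))
    (hsF : ∀ᶠ n in atTop, φ.denom.eval (t n) ≠ 0 ∧
        v (RatFunc.eval (RingHom.id K) (t n) φ) = v (A' / B'))
    (hW : {ψ : RatFunc K | ∀ᶠ n in atTop, 0 ≤ v (RatFunc.eval (RingHom.id K) (s n) ψ)} ⊆
          {ψ : RatFunc K | ∀ᶠ n in atTop, 0 ≤ v (RatFunc.eval (RingHom.id K) (t n) ψ)}) :
    v (A / B) ≤ v (A' / B') := by
  set a : K := B / A with ha_def
  have ha : a ≠ 0 := div_ne_zero hB hA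
  have hinv : a * (A / B) = 1 := by rw [ha_def]; field_simp
  have hval0 : v a + v (A / B) = 0 := by
    rw [← AddValuation.map_mul, hinv, AddValuation.map_one]
  set ψ : RatFunc K := RatFunc.C a * φ with hψ_def
  have hevalψ : ∀ x : K, φ.denom.eval x ≠ 0 →
      RatFunc.eval (RingHom.id K) x ψ = a * RatFunc.eval (RingHom.id K) x φ := by
    intro x hx
    rw [hψ_def, RatFunc.eval_mul, RatFunc.eval_C, RingHom.id_apply]
    · rw [RatFunc.denom_C, Polynomial.eval₂_one]; exact one_ne_zero
    · rw [eval₂_id']; exact hx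
  have hmem : ψ ∈ {ψ : RatFunc K | ∀ᶠ n in atTop, 0 ≤ v (RatFunc.eval (RingHom.id K) (s n) ψ)} := by
    filter_upwards [hsE] with n hn
    rw [hevalψ (s n) hn.1, AddValuation.map_mul, hn.2]
    exact le_of_eq hval0.symm
  have hmem' := hW hmem
  have : ∀ᶠ _n : ℕ in atTop, (0 : WithTop ℝ) ≤ v a + v (A' / B') := by
    filter_upwards [hmem', hsF] with n h1 h2
    rw [hevalψ (t n) h2.1, AddValuation.map_mul, h2.2] at h1
    exact h1
  obtain ⟨n, hn⟩ := this.exists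
  calc v (A / B) = v (A / B) + 0 := (add_zero _).symm
    _ ≤ v (A / B) + (v a + v (A' / B')) := add_le_add_right hn _
    _ = (v a + v (A / B)) + v (A' / B') := by rw [← add_assoc, add_comm (v (A / B)) (v a)]
    _ = 0 + v (A' / B') := by rw [hval0]
    _ = v (A' / B') := zero_add _

end Aux

/-- If E = {s_n} and F = {t_n} are pseudo-convergent sequences of transcendental
type with the same Ostrowski valuation ring W_E = W_F, then w_E = w_F: for every
nonzero φ ∈ K(X) the (eventually constant) sequences v(φ(s_n)) and v(φ(t_n))
have the same limit. -/
theorem stmt17 {K : Type*} [Field K] (v : AddValuation K (WithTop ℝ)) (s t : ℕ → K)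
    (hE : ∀ n, v (s (n + 1) - s n) < v (s (n + 2) - s (n + 1)))
    (hF : ∀ n, v (t (n + 1) - t n) < v (t (n + 2) - t (n + 1)))
    (hEtr : ∀ f : Polynomial K, ∃ c : WithTop ℝ, ∀ᶠ n in atTop, v (f.eval (s n)) = c)
    (hFtr : ∀ f : Polynomial K, ∃ c : WithTop ℝ, ∀ᶠ n in atTop, v (f.eval (t n)) = c)
    (hW : {φ : RatFunc K | ∀ᶠ n in atTop, 0 ≤ v (RatFunc.eval (RingHom.id K) (s n) φ)} =
          {φ : RatFunc K | ∀ᶠ n in atTop, 0 ≤ v (RatFunc.eval (RingHom.id K) (t n) φ)}) :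
    ∀ φ : RatFunc K, φ ≠ 0 → ∃ c : WithTop ℝ,
      (∀ᶠ n in atTop, v (RatFunc.eval (RingHom.id K) (s n) φ) = c) ∧
      (∀ᶠ n in atTop, v (RatFunc.eval (RingHom.id K) (t n) φ) = c) := by
  intro φ hφ
  obtain ⟨A, B, hA, hB, hsE⟩ := pc_ratfunc_val v hE hEtr hφ
  obtain ⟨A', B', hA', hB', hsF⟩ := pc_ratfunc_val v hF hFtr hφ
  have h1 : v (A / B) ≤ v (A' / B') := pc_le v hA hB hA' hB' hsE hsF hW.le
  have h2 : v (A' / B') ≤ v (A / B) := pc_le v hA' hB' hA hB hsF hsE hW.ge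
  have heq : v (A' / B') = v (A / B) := le_antisymm h2 h1
  exact ⟨v (A / B), hsE.mono fun n h => h.2, hsF.mono fun n h => heq ▸ h.2⟩
end

section
/- Let V be a non-discrete rank one valuation domain with quotient field K, let u be an extension of v to the algebraic closure \overline{K}, let β ∈ \overline{K}, and let r > 0 be a real. Then the closed ball B = {x ∈ \overline{K} : d_u(x, β) ≤ r} equals the set of pseudo-limits (with respect to u) of some pseudo-convergent sequence E ⊂ K if and only if r ≥ d_u(β, K) := inf{e^{−u(β−x)} : x ∈ K}. -/
open Filter

/-- Geometric characterization of pseudo-limit sets (reparametrized via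
r = e^{-γ}, so that the closed ball of radius r around β is {x : γ ≤ u(x - β)}
and the condition r ≥ d_u(β, K) becomes γ ≤ sup_{x ∈ K} u(β - x)):
for a non-discrete rank one valuation v on K, β in the algebraic closure L and
γ ∈ ℝ, the closed ball {x : γ ≤ u(x - β)} is the set of pseudo-limits (w.r.t. u)
of some pseudo-convergent sequence in K iff γ ≤ sup_{x ∈ K} u(β - x). -/
theorem stmt18 {K L : Type*} [Field K] [Field L] [Algebra K L]
    [IsAlgClosed L] [Algebra.IsAlgebraic K L]
    (v : AddValuation K (WithTop ℝ)) (u : AddValuation L (WithTop ℝ))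
    (hu : ∀ x : K, u (algebraMap K L x) = v x)
    (hnondisc : ∀ a b : ℝ, a < b → ∃ x : K, x ≠ 0 ∧
      (a : WithTop ℝ) < v x ∧ v x < (b : WithTop ℝ))
    (β : L) (γ : ℝ) :
    (∃ s : ℕ → K, (∀ n, v (s (n + 1) - s n) < v (s (n + 2) - s (n + 1))) ∧
        {x : L | ∀ n, u (x - algebraMap K L (s n)) < u (x - algebraMap K L (s (n + 1)))} =
          {x : L | (γ : WithTop ℝ) ≤ u (x - β)}) ↔
      (γ : WithTop ℝ) ≤ ⨆ x : K, u (β - algebraMap K L x) := by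
  constructor
  · rintro ⟨s, hpc, hset⟩
    -- β is in the ball, hence a pseudo-limit
    have hβmem : β ∈ {x : L | (γ : WithTop ℝ) ≤ u (x - β)} := by
      simp [Set.mem_setOf_eq, sub_self]
    rw [← hset] at hβmem
    have hβ : ∀ n, u (β - algebraMap K L (s n)) < u (β - algebraMap K L (s (n + 1))) := hβmem
    by_contra hlt
    push_neg at hlt
    obtain ⟨c, hc, hcγ⟩ := WithTop.lt_iff_exists_coe.mp hlt
    obtain ⟨t, ht0, htc, htγ⟩ := hnondisc c γ (WithTop.coe_lt_coe.mp hcγ)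
    set x : L := β + algebraMap K L t with hxdef
    have hxβ : u (x - β) = v t := by
      rw [hxdef, add_sub_cancel_left, hu]
    have hwn : ∀ n, u (β - algebraMap K L (s n)) < v t := by
      intro n
      calc u (β - algebraMap K L (s n)) ≤ ⨆ y : K, u (β - algebraMap K L y) :=
            le_ciSup (f := fun y : K => u (β - algebraMap K L y)) (OrderTop.bddAbove _) (s n)
        _ = (c : WithTop ℝ) := hc
        _ < v t := htc
    have hxL : x ∈ {y : L | ∀ n, u (y - algebraMap K L (s n)) < u (y - algebraMap K L (s (n + 1)))} := by
      intro n
      have h1 : ∀ m, u (x - algebraMap K L (s m)) = u (β - algebraMap K L (s m)) := by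
        intro m
        have : x - algebraMap K L (s m) = (β - algebraMap K L (s m)) + algebraMap K L t := by
          rw [hxdef]; ring
        rw [this, u.map_add_eq_of_lt_left]
        · exact (hu t).symm ▸ hwn m
      rw [h1 n, h1 (n+1)]
      exact hβ n
    rw [hset] at hxL
    have : (γ : WithTop ℝ) ≤ v t := hxβ ▸ hxL
    exact absurd (lt_of_le_of_lt this htγ) (lt_irrefl _)
  · intro hγ
    -- the sequence of target values
    set A : ℕ → ℝ := fun n => γ - 1 / (n + 1) with hAdef
    have hAmono : ∀ n : ℕ, A n < A (n + 1) := by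
      intro n
      simp only [hAdef]
      have h1 : (0:ℝ) < (n:ℝ) + 1 := by positivity
      have h2 : ((n:ℝ) + 1) < ((n:ℕ) + 1 : ℕ) + 1 := by push_cast; linarith
      have := one_div_lt_one_div_of_lt h1 h2
      linarith
    have hAlt : ∀ n : ℕ, A n < γ := by
      intro n
      simp only [hAdef]
      have h1 : (0:ℝ) < 1 / ((n:ℝ) + 1) := by positivity
      linarith
    -- choose elements t n with A n < v (t n) < A (n+1)
    choose t ht0 htl htr using fun n => hnondisc (A n) (A (n + 1)) (hAmono n)
    -- extract real values r n
    have hr : ∀ n, ∃ r : ℝ, v (t n) = (r : WithTop ℝ) ∧ A n < r ∧ r < A (n + 1) := by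
      intro n
      obtain ⟨r, hr1, hr2⟩ := WithTop.lt_iff_exists_coe.mp (htr n)
      exact ⟨r, hr1, by exact_mod_cast hr1 ▸ htl n, by exact_mod_cast hr2⟩
    choose r hrv hrl hrr using hr
    have hrmono : ∀ n, r n < r (n + 1) := fun n => (hrr n).trans (hrl (n + 1))
    have hrγ : ∀ n, r n < γ := fun n => (hrr n).trans_le (le_of_lt (hAlt (n + 1)))
    -- choose approximants x n with r n < u (β - x n)
    have hx : ∀ n, ∃ y : K, (r n : WithTop ℝ) < u (β - algebraMap K L y) := by
      intro n
      have hlt : (r n : WithTop ℝ) < ⨆ y : K, u (β - algebraMap K L y) :=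
        lt_of_lt_of_le (by exact_mod_cast hrγ n) hγ
      by_contra hcon
      push_neg at hcon
      exact absurd (ciSup_le hcon) (not_le.mpr hlt)
    choose x hxv using hx
    refine ⟨fun n => x n - t n, ?_, ?_⟩
    all_goals
      have key : ∀ n, u (β - algebraMap K L (x n - t n)) = (r n : WithTop ℝ) := by
        intro n
        have heq : β - algebraMap K L (x n - t n)
            = algebraMap K L (t n) + (β - algebraMap K L (x n)) := by
          rw [map_sub]; ring
        rw [heq, u.map_add_eq_of_lt_left]
        · rw [hu, hrv]
        · rw [hu, hrv]; exact hxv n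
    all_goals
      have keyd : ∀ n, v ((x (n+1) - t (n+1)) - (x n - t n)) = (r n : WithTop ℝ) := by
        intro n
        rw [← hu]
        have heq : algebraMap K L ((x (n+1) - t (n+1)) - (x n - t n))
            = (β - algebraMap K L (x n - t n)) - (β - algebraMap K L (x (n+1) - t (n+1))) := by
          simp only [map_sub]; ring
        rw [heq, u.map_sub_eq_of_lt_left, key n]
        rw [key n, key (n+1)]
        exact_mod_cast hrmono n
    · intro n
      rw [keyd n, keyd (n+1)]
      exact_mod_cast hrmono n
    · ext z
      simp only [Set.mem_setOf_eq]
      constructor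
      · intro hz
        -- z is a pseudo-limit; show γ ≤ u (z - β)
        have hz2 : ∀ n, u (z - algebraMap K L (x n - t n)) = (r n : WithTop ℝ) := by
          intro n
          have heq : algebraMap K L ((x (n+1) - t (n+1)) - (x n - t n))
              = (z - algebraMap K L (x n - t n)) - (z - algebraMap K L (x (n+1) - t (n+1))) := by
            simp only [map_sub]; ring
          have := keyd n
          rw [← hu, heq, u.map_sub_eq_of_lt_left (hz n)] at this
          exact this
        have hge : ∀ n, (r n : WithTop ℝ) ≤ u (z - β) := by
          intro n
          have heq : z - β = (z - algebraMap K L (x n - t n)) - (β - algebraMap K L (x n - t n)) := by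
            ring
          rw [heq]
          exact u.map_le_sub (le_of_eq (hz2 n).symm) (le_of_eq (key n).symm)
        -- pass to the limit
        rcases eq_or_ne (u (z - β)) ⊤ with htop | hne
        · rw [htop]; exact le_top
        · obtain ⟨c, hc⟩ := WithTop.ne_top_iff_exists.mp hne
          rw [← hc, WithTop.coe_le_coe]
          by_contra hcγ
          push_neg at hcγ
          obtain ⟨n, hn⟩ := exists_nat_one_div_lt (sub_pos.mpr hcγ)
          have h1 : A n ≤ r n := le_of_lt (hrl n)
          have h2 : (r n : WithTop ℝ) ≤ (c : WithTop ℝ) := hc ▸ hge n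
          have h3 : r n ≤ c := by exact_mod_cast h2
          have : γ - 1 / (n + 1) ≤ c := le_trans h1 h3
          linarith
      · intro hz n
        have hz3 : ∀ m, u (z - algebraMap K L (x m - t m)) = (r m : WithTop ℝ) := by
          intro m
          have hlt : u (β - algebraMap K L (x m - t m)) < u (z - β) := by
            rw [key m]
            exact lt_of_lt_of_le (by exact_mod_cast hrγ m) hz
          have heq : z - algebraMap K L (x m - t m)
              = (z - β) + (β - algebraMap K L (x m - t m)) := by
            ring
          rw [heq, u.map_add_eq_of_lt_right hlt, key m]
        rw [hz3 n, hz3 (n+1)]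
        exact_mod_cast hrmono n
end
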